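/- arXiv:2303.00839 — 4 statements merged into one kernel-verified Lean document; each statement's English description precedes it below -/
import Mathlib

section
/- Let W be a well-order and let G_W = Wr_{λ∈W^op} H_λ where every H_λ is the alternating group A₅. Then the set of nontrivial normal subgroups of G_W (including G_W itself), partially ordered by inclusion, is order-isomorphic to W^op. -/
open scoped Classical

noncomputable section

namespace GW

/-- The support of an element of a dependent product of groups. -/
def supp {Λ : Type*} {H : Λ → Type*} [∀ l, One (H l)] (x : ∀ l, H l) : Set Λ :=
  {l | x l ≠ 1}

/-- The restricted direct product: functions with finite support. -/
abbrev S (Λ : Type*) (H : Λ → Type*) [∀ l, One (H l)] : Type _ :=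
  {x : ∀ l, H l // (supp x).Finite}

variable {Λ : Type*} [PartialOrder Λ] (H : Λ → Type*) [∀ l, Group (H l)]

/-- The underlying function of the permutation `ξ_h`. -/
def xiFun (l : Λ) (h : H l) (x : ∀ m, H m) : ∀ m, H m :=
  Function.update x l (if ∀ n, l < n → x n = 1 then h * x l else x l)

lemma xiFun_apply_ne (l : Λ) (h : H l) (x : ∀ m, H m) {m : Λ} (hm : m ≠ l) :
    xiFun H l h x m = x m := Function.update_of_ne hm _ x

lemma xiFun_support (l : Λ) (h : H l) (x : ∀ m, H m) :
    supp (xiFun H l h x) ⊆ insert l (supp x) := by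
  intro m hm
  rcases eq_or_ne m l with rfl | hne
  · exact Set.mem_insert _ _
  · refine Set.mem_insert_of_mem _ ?_
    have : xiFun H l h x m ≠ 1 := hm
    rwa [xiFun_apply_ne H l h x hne] at this

lemma xiFun_cond (l : Λ) (h : H l) (x : ∀ m, H m) :
    (∀ n, l < n → xiFun H l h x n = 1) ↔ ∀ n, l < n → x n = 1 := by
  constructor
  · intro hc n hn
    have := hc n hn
    rwa [xiFun_apply_ne H l h x hn.ne'] at this
  · intro hc n hn
    rw [xiFun_apply_ne H l h x hn.ne']
    exact hc n hn

lemma xiFun_inv (l : Λ) (h : H l) (x : ∀ m, H m) :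
    xiFun H l h⁻¹ (xiFun H l h x) = x := by
  funext m
  rcases eq_or_ne m l with rfl | hne
  · have hyl : xiFun H m h x m = if ∀ n, m < n → x n = 1 then h * x m else x m := by
      simp [xiFun]
    show Function.update (xiFun H m h x) m
      (if ∀ n, m < n → xiFun H m h x n = 1 then h⁻¹ * xiFun H m h x m
        else xiFun H m h x m) m = x m
    rw [Function.update_self]
    by_cases hc : ∀ n, m < n → x n = 1
    · rw [if_pos ((xiFun_cond H m h x).2 hc), hyl, if_pos hc, inv_mul_cancel_left]
    · rw [if_neg (fun hcy => hc ((xiFun_cond H m h x).1 hcy)), hyl, if_neg hc]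
  · rw [xiFun_apply_ne H l h⁻¹ _ hne, xiFun_apply_ne H l h x hne]

/-- The permutation `ξ_h` of the restricted product `S`. -/
def xi (l : Λ) (h : H l) : Equiv.Perm (S Λ H) where
  toFun x := ⟨xiFun H l h x.1, (x.2.insert l).subset (xiFun_support H l h x.1)⟩
  invFun x := ⟨xiFun H l h⁻¹ x.1, (x.2.insert l).subset (xiFun_support H l h⁻¹ x.1)⟩
  left_inv x := Subtype.ext (xiFun_inv H l h x.1)
  right_inv x := Subtype.ext (by simpa using xiFun_inv H l h⁻¹ x.1)

/-- The generalized wreath product `Wr_{λ∈Λ} H_λ` as a subgroup of `Perm S`. -/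
def Wr (Λ : Type*) [PartialOrder Λ] (H : Λ → Type*) [∀ l, Group (H l)] :
    Subgroup (Equiv.Perm (S Λ H)) :=
  Subgroup.closure {e | ∃ (l : Λ) (h : H l), e = xi H l h}

/-- For `Γ ⊆ Λ`, the subgroup `H_Γ` of `Perm S` generated by the `ξ_h` with `h ∈ H_γ`, `γ ∈ Γ`. -/
def HSub (Γ : Set Λ) : Subgroup (Equiv.Perm (S Λ H)) :=
  Subgroup.closure {e | ∃ (l : Λ) (h : H l), l ∈ Γ ∧ e = xi H l h}

/-- For `Γ ⊆ Λ`, the subgroup `D_Γ` of `H_Λ` of elements fixing all coordinates outside `Γ`. -/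
def D (Γ : Set Λ) : Subgroup ↥(Wr Λ H) where
  carrier := {g | ∀ (x : S Λ H) (l : Λ), l ∉ Γ → ((g : Equiv.Perm (S Λ H)) x).1 l = x.1 l}
  one_mem' := fun _ _ _ => rfl
  mul_mem' := by
    intro a b ha hb x l hl
    have h1 := ha ((b : Equiv.Perm (S Λ H)) x) l hl
    have h2 := hb x l hl
    simpa [h2] using h1
  inv_mem' := by
    intro a ha x l hl
    have := ha (((a : Equiv.Perm (S Λ H)))⁻¹ x) l hl
    simpa using this.symm

end GW

end

noncomputable section

namespace GW

open Equiv

set_option linter.unusedSectionVars false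

variable {Λ : Type*} [LinearOrder Λ] {H : Λ → Type*} [∀ l, Group (H l)]

/-- Agreement strictly above `l`. -/
def SAg (l : Λ) (x y : ∀ m, H m) : Prop := ∀ m, l < m → x m = y m

/-- Agreement at and above `l`. -/
def EAg (l : Λ) (x y : ∀ m, H m) : Prop := ∀ m, l ≤ m → x m = y m

lemma SAg.trans {l : Λ} {x y z : ∀ m, H m} (h1 : SAg l x y) (h2 : SAg l y z) :
    SAg l x z := fun m hm => (h1 m hm).trans (h2 m hm)

lemma SAg.symm {l : Λ} {x y : ∀ m, H m} (h1 : SAg l x y) : SAg l y x :=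
  fun m hm => (h1 m hm).symm

lemma SAg.refl (l : Λ) (x : ∀ m, H m) : SAg l x x := fun _ _ => rfl

/-- The underlying function of the permutation `ζ_{l,t,h}`. -/
def zetaFun (l : Λ) (t : ∀ m, H m) (h : H l) (x : ∀ m, H m) : ∀ m, H m :=
  Function.update x l (if SAg l x t then h * x l else x l)

lemma zetaFun_apply_ne (l : Λ) (t : ∀ m, H m) (h : H l) (x : ∀ m, H m) {m : Λ}
    (hm : m ≠ l) : zetaFun l t h x m = x m := Function.update_of_ne hm _ x

lemma zetaFun_apply_self (l : Λ) (t : ∀ m, H m) (h : H l) (x : ∀ m, H m) :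
    zetaFun l t h x l = if SAg l x t then h * x l else x l := Function.update_self _ _ _

lemma zetaFun_sag (l : Λ) (t : ∀ m, H m) (h : H l) (x y : ∀ m, H m) :
    SAg l (zetaFun l t h x) y ↔ SAg l x y := by
  constructor <;> intro hs m hm
  · rw [← zetaFun_apply_ne l t h x hm.ne']; exact hs m hm
  · rw [zetaFun_apply_ne l t h x hm.ne']; exact hs m hm

lemma zetaFun_support (l : Λ) (t : ∀ m, H m) (h : H l) (x : ∀ m, H m) :
    supp (zetaFun l t h x) ⊆ insert l (supp x) := by
  intro m hm
  rcases eq_or_ne m l with rfl | hne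
  · exact Set.mem_insert _ _
  · refine Set.mem_insert_of_mem _ ?_
    have : zetaFun l t h x m ≠ 1 := hm
    rwa [zetaFun_apply_ne l t h x hne] at this

lemma zetaFun_inv (l : Λ) (t : ∀ m, H m) (h : H l) (x : ∀ m, H m) :
    zetaFun l t h⁻¹ (zetaFun l t h x) = x := by
  funext m
  rcases eq_or_ne m l with rfl | hne
  · rw [zetaFun_apply_self]
    by_cases hc : SAg m x t
    · rw [if_pos ((zetaFun_sag m t h x t).2 hc), zetaFun_apply_self, if_pos hc,
        inv_mul_cancel_left]
    · rw [if_neg (fun hcy => hc ((zetaFun_sag m t h x t).1 hcy)), zetaFun_apply_self,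
        if_neg hc]
  · rw [zetaFun_apply_ne l t h⁻¹ _ hne, zetaFun_apply_ne l t h x hne]

/-- The permutation `ζ_{l,t,h}` of the restricted product `S`: multiply coordinate `l`
by `h` on the set of configurations agreeing with `t` strictly above `l`. -/
def zeta (l : Λ) (t : ∀ m, H m) (h : H l) : Equiv.Perm (S Λ H) where
  toFun x := ⟨zetaFun l t h x.1, (x.2.insert l).subset (zetaFun_support l t h x.1)⟩
  invFun x := ⟨zetaFun l t h⁻¹ x.1, (x.2.insert l).subset (zetaFun_support l t h⁻¹ x.1)⟩
  left_inv x := Subtype.ext (zetaFun_inv l t h x.1)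
  right_inv x := Subtype.ext (by simpa using zetaFun_inv l t h⁻¹ x.1)

lemma zeta_apply (l : Λ) (t : ∀ m, H m) (h : H l) (x : S Λ H) :
    ((zeta l t h x : S Λ H)).1 = zetaFun l t h x.1 := rfl

lemma zeta_apply_ne (l : Λ) (t : ∀ m, H m) (h : H l) (x : S Λ H) {m : Λ} (hm : m ≠ l) :
    (zeta l t h x).1 m = x.1 m := zetaFun_apply_ne l t h x.1 hm

lemma zeta_apply_self (l : Λ) (t : ∀ m, H m) (h : H l) (x : S Λ H) :
    (zeta l t h x).1 l = if SAg l x.1 t then h * x.1 l else x.1 l :=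
  zetaFun_apply_self l t h x.1

lemma zeta_inv (l : Λ) (t : ∀ m, H m) (h : H l) :
    (zeta l t h)⁻¹ = zeta l t h⁻¹ := by
  ext x
  rfl

lemma zeta_one (l : Λ) (t : ∀ m, H m) : zeta l t (1 : H l) = 1 := by
  refine Equiv.ext fun x => Subtype.ext ?_
  show zetaFun l t 1 x.1 = x.1
  funext m
  rcases eq_or_ne m l with rfl | hne
  · rw [zetaFun_apply_self]; split <;> simp
  · exact zetaFun_apply_ne _ _ _ _ hne

lemma zeta_mul_same (l : Λ) (t : ∀ m, H m) (h h' : H l) :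
    zeta l t h * zeta l t h' = zeta l t (h * h') := by
  refine Equiv.ext fun x => Subtype.ext ?_
  show zetaFun l t h (zetaFun l t h' x.1) = zetaFun l t (h * h') x.1
  funext m
  rcases eq_or_ne m l with rfl | hne
  · rw [zetaFun_apply_self, zetaFun_apply_self]
    by_cases hc : SAg m x.1 t
    · rw [if_pos ((zetaFun_sag m t h' x.1 t).2 hc), zetaFun_apply_self, if_pos hc,
        if_pos hc, mul_assoc]
    · rw [if_neg (fun hcy => hc ((zetaFun_sag m t h' x.1 t).1 hcy)), zetaFun_apply_self,
        if_neg hc, if_neg hc]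
  · rw [zetaFun_apply_ne _ _ _ _ hne, zetaFun_apply_ne _ _ _ _ hne,
      zetaFun_apply_ne _ _ _ _ hne]

lemma xi_eq_zeta (l : Λ) (h : H l) : xi H l h = zeta l (fun _ => 1) h := by
  refine Equiv.ext fun x => Subtype.ext ?_
  show xiFun H l h x.1 = zetaFun l (fun _ => 1) h x.1
  funext m
  rcases eq_or_ne m l with rfl | hne
  · have hyl : xiFun H m h x.1 m = if ∀ n, m < n → x.1 n = 1 then h * x.1 m else x.1 m := by
      simp [xiFun]
    rw [hyl, zetaFun_apply_self]
    rfl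
  · rw [zetaFun_apply_ne _ _ _ _ hne]; exact xiFun_apply_ne H l h x.1 hne

end GW

end

noncomputable section

namespace GW

open Equiv

set_option linter.unusedSectionVars false

variable {Λ : Type*} [LinearOrder Λ] {H : Λ → Type*} [∀ l, Group (H l)]

lemma xi_mem_Wr (l : Λ) (h : H l) : xi H l h ∈ Wr Λ H :=
  Subgroup.subset_closure ⟨l, h, rfl⟩

/-- The key conjugation compatibility: for `l < u`, `z` agrees with `t` above `l`
iff `ζ_{u,s,k} z` agrees with `zetaFun u s k t` above `l`. -/
lemma sag_zeta_iff {l u : Λ} (hlu : l < u) (s t : ∀ m, H m) (k : H u) (z : S Λ H) :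
    SAg l z.1 t ↔ SAg l (zeta u s k z).1 (zetaFun u s k t) := by
  constructor
  · intro A m hm
    rcases eq_or_ne m u with rfl | hne
    · rw [zeta_apply_self, zetaFun_apply_self]
      have hzt : SAg m z.1 s ↔ SAg m t s := by
        constructor <;> intro hs n hn
        · rw [← A n (hlu.trans hn)]; exact hs n hn
        · rw [A n (hlu.trans hn)]; exact hs n hn
      by_cases hc : SAg m z.1 s
      · rw [if_pos hc, if_pos (hzt.1 hc), A m hm]
      · rw [if_neg hc, if_neg (fun hy => hc (hzt.2 hy)), A m hm]
    · rw [zeta_apply_ne _ _ _ _ hne, zetaFun_apply_ne _ _ _ _ hne]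
      exact A m hm
  · intro B m hm
    have habove : ∀ n, u < n → z.1 n = t n := by
      intro n hn
      have := B n (hlu.trans hn)
      rwa [zeta_apply_ne _ _ _ _ hn.ne', zetaFun_apply_ne _ _ _ _ hn.ne'] at this
    rcases eq_or_ne m u with rfl | hne
    · have hzt : SAg m z.1 s ↔ SAg m t s := by
        constructor <;> intro hs n hn
        · rw [← habove n hn]; exact hs n hn
        · rw [habove n hn]; exact hs n hn
      have := B m hm
      rw [zeta_apply_self, zetaFun_apply_self] at this
      by_cases hc : SAg m z.1 s
      · rw [if_pos hc, if_pos (hzt.1 hc)] at this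
        exact mul_left_cancel this
      · rwa [if_neg hc, if_neg (fun hy => hc (hzt.2 hy))] at this
    · have := B m hm
      rwa [zeta_apply_ne _ _ _ _ hne, zetaFun_apply_ne _ _ _ _ hne] at this

lemma zeta_conj {l u : Λ} (hlu : l < u) (s t : ∀ m, H m) (k : H u) (h : H l) :
    zeta u s k * zeta l t h = zeta l (zetaFun u s k t) h * zeta u s k := by
  refine Equiv.ext fun z => Subtype.ext ?_
  show zetaFun u s k (zetaFun l t h z.1) = zetaFun l (zetaFun u s k t) h (zetaFun u s k z.1)
  funext m
  rcases eq_or_ne m u with rfl | hneu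
  · rw [zetaFun_apply_self, zetaFun_apply_ne _ _ _ _ hlu.ne']
    have hcond : SAg m (zetaFun l t h z.1) s ↔ SAg m z.1 s := by
      constructor <;> intro hs n hn
      · rw [← zetaFun_apply_ne l t h z.1 (hlu.trans hn).ne']; exact hs n hn
      · rw [zetaFun_apply_ne l t h z.1 (hlu.trans hn).ne']; exact hs n hn
    rw [zetaFun_apply_ne l (zetaFun m s k t) h (zetaFun m s k z.1) hlu.ne',
      zetaFun_apply_self]
    by_cases hc : SAg m z.1 s
    · rw [if_pos (hcond.2 hc), if_pos hc]
    · rw [if_neg (fun hy => hc (hcond.1 hy)), if_neg hc]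
  rcases eq_or_ne m l with rfl | hnel
  · rw [zetaFun_apply_ne _ _ _ _ hneu, zetaFun_apply_self, zetaFun_apply_self,
      zetaFun_apply_ne _ _ _ _ hneu]
    have hiff := sag_zeta_iff hlu s t k z
    rw [zeta_apply] at hiff
    by_cases hc : SAg m z.1 t
    · rw [if_pos hc, if_pos (hiff.1 hc)]
    · rw [if_neg hc, if_neg (fun hy => hc (hiff.2 hy))]
  · rw [zetaFun_apply_ne _ _ _ _ hneu, zetaFun_apply_ne _ _ _ _ hnel,
      zetaFun_apply_ne _ _ _ _ hnel, zetaFun_apply_ne _ _ _ _ hneu]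

/-- A `zeta` permutation whose slice data has finite support above `l` lies in the
generalized wreath product. -/
lemma zeta_mem_Wr : ∀ (n : ℕ) (l : Λ) (t : ∀ m, H m) (h : H l)
    (hfin : {m | l < m ∧ t m ≠ 1}.Finite), hfin.toFinset.card ≤ n → zeta l t h ∈ Wr Λ H := by
  intro n
  induction n with
  | zero =>
    intro l t h hfin hcard
    have hempty : ∀ m, l < m → t m = 1 := by
      intro m hm
      by_contra hne
      have : m ∈ hfin.toFinset := by simp [hm, hne]
      rw [Finset.card_eq_zero.1 (Nat.le_zero.1 hcard)] at this
      simpa using this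
    have : zeta l t h = xi H l h := by
      rw [xi_eq_zeta]
      refine Equiv.ext fun x => Subtype.ext ?_
      show zetaFun l t h x.1 = zetaFun l (fun _ => 1) h x.1
      funext m
      rcases eq_or_ne m l with rfl | hne
      · rw [zetaFun_apply_self, zetaFun_apply_self]
        have : SAg m x.1 t ↔ SAg m x.1 (fun _ => (1 : _)) := by
          constructor <;> intro hs n hn
          · exact (hs n hn).trans (hempty n hn)
          · rw [hempty n hn]; exact hs n hn
        by_cases hc : SAg m x.1 t
        · rw [if_pos hc, if_pos (this.1 hc)]
        · rw [if_neg hc, if_neg (fun hy => hc (this.2 hy))]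
      · rw [zetaFun_apply_ne _ _ _ _ hne, zetaFun_apply_ne _ _ _ _ hne]
    rw [this]; exact xi_mem_Wr l h
  | succ n ih =>
    intro l t h hfin hcard
    rcases Set.eq_empty_or_nonempty {m | l < m ∧ t m ≠ 1} with hemp | ⟨u, hu⟩
    · refine ih l t h hfin ?_
      simp [Set.Finite.toFinset_eq_empty.2 hemp]
    · have hul : l < u := hu.1
      set t₂ : ∀ m, H m := Function.update t u 1 with ht₂
      have ht₂ne : ∀ m, m ≠ u → t₂ m = t m := fun m hm => Function.update_of_ne hm _ _
      have ht₂u : t₂ u = 1 := Function.update_self _ _ _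
      -- the two smaller bad sets
      have hfin₂ : {m | l < m ∧ t₂ m ≠ 1}.Finite := by
        refine hfin.subset ?_
        rintro m ⟨hm1, hm2⟩
        rcases eq_or_ne m u with rfl | hne
        · exact absurd ht₂u hm2
        · exact ⟨hm1, by rwa [ht₂ne m hne] at hm2⟩
      have hfinu : {m | u < m ∧ t m ≠ 1}.Finite := by
        refine hfin.subset ?_
        rintro m ⟨hm1, hm2⟩
        exact ⟨hul.trans hm1, hm2⟩
      have hsub₂ : hfin₂.toFinset ⊆ hfin.toFinset.erase u := by
        intro m hm
        simp only [Set.Finite.mem_toFinset] at hm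
        refine Finset.mem_erase.2 ⟨?_, ?_⟩
        · rintro rfl; exact hm.2 ht₂u
        · simp only [Set.Finite.mem_toFinset]
          refine ⟨hm.1, ?_⟩
          intro hc
          rcases eq_or_ne m u with rfl | hne
          · exact hm.2 ht₂u
          · exact hm.2 (by rwa [ht₂ne m hne])
      have hsubu : hfinu.toFinset ⊆ hfin.toFinset.erase u := by
        intro m hm
        simp only [Set.Finite.mem_toFinset] at hm
        exact Finset.mem_erase.2 ⟨hm.1.ne', by
          simp only [Set.Finite.mem_toFinset]; exact ⟨hul.trans hm.1, hm.2⟩⟩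
      have hmemu : u ∈ hfin.toFinset := by simp [hu.1, hu.2]
      have hcard' : (hfin.toFinset.erase u).card ≤ n := by
        have := Finset.card_erase_of_mem hmemu
        omega
      have hc₂ : hfin₂.toFinset.card ≤ n := le_trans (Finset.card_le_card hsub₂) hcard'
      have hcu : hfinu.toFinset.card ≤ n := le_trans (Finset.card_le_card hsubu) hcard'
      have hzu : zeta u t (t u) ∈ Wr Λ H := ih u t (t u) hfinu hcu
      have hz₂ : zeta l t₂ h ∈ Wr Λ H := ih l t₂ h hfin₂ hc₂
      have key : zetaFun u t (t u) t₂ = t := by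
        funext m
        rcases eq_or_ne m u with rfl | hne
        · rw [zetaFun_apply_self]
          have : SAg m t₂ t := by
            intro n hn
            exact ht₂ne n hn.ne'
          rw [if_pos this, ht₂u, mul_one]
        · rw [zetaFun_apply_ne _ _ _ _ hne, ht₂ne m hne]
      have heq : zeta l t h = zeta u t (t u) * zeta l t₂ h * (zeta u t (t u))⁻¹ := by
        rw [zeta_conj hul t t₂ (t u) h, key]
        group
      rw [heq]
      exact Subgroup.mul_mem _ (Subgroup.mul_mem _ hzu hz₂) (Subgroup.inv_mem _ hzu)

lemma zeta_mem_Wr' (l : Λ) (t : S Λ H) (h : H l) : zeta l t.1 h ∈ Wr Λ H := by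
  have hfin : {m | l < m ∧ t.1 m ≠ 1}.Finite := t.2.subset (fun m hm => hm.2)
  exact zeta_mem_Wr hfin.toFinset.card l t.1 h hfin le_rfl

end GW

end

noncomputable section

namespace GW

open Equiv

set_option linter.unusedSectionVars false
set_option maxHeartbeats 1000000

variable {Λ : Type*} [LinearOrder Λ] {H : Λ → Type*} [∀ l, Group (H l)]

/-- The cocycle of `g` at level `l` and configuration `x`. -/
def cc (g : Equiv.Perm (S Λ H)) (l : Λ) (x : S Λ H) : H l := (g x).1 l * (x.1 l)⁻¹

lemma cc_spec (g : Equiv.Perm (S Λ H)) (l : Λ) (x : S Λ H) :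
    (g x).1 l = cc g l x * x.1 l := by simp [cc]

lemma cc_mul (g g' : Equiv.Perm (S Λ H)) (l : Λ) (x : S Λ H) :
    cc (g * g') l x = cc g l (g' x) * cc g' l x := by
  simp [cc, mul_assoc]

lemma cc_one (l : Λ) (x : S Λ H) : cc (1 : Equiv.Perm (S Λ H)) l x = 1 := by simp [cc]

lemma cc_inv (g : Equiv.Perm (S Λ H)) (l : Λ) (x : S Λ H) :
    cc g⁻¹ l x = (cc g l (g⁻¹ x))⁻¹ := by
  simp [cc, mul_inv_rev]

lemma cc_zeta_self (l : Λ) (t : ∀ m, H m) (h : H l) (x : S Λ H) :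
    cc (zeta l t h) l x = if SAg l x.1 t then h else 1 := by
  rw [cc, zeta_apply_self]
  split <;> simp

lemma cc_zeta_ne (l : Λ) (t : ∀ m, H m) (h : H l) (x : S Λ H) {m : Λ} (hm : m ≠ l) :
    cc (zeta l t h) m x = 1 := by
  rw [cc, zeta_apply_ne _ _ _ _ hm, mul_inv_cancel]

/-- `g` only looks at coordinates `≥ l` to decide coordinate `l`. -/
def CoordEq (g : Equiv.Perm (S Λ H)) : Prop :=
  ∀ (l : Λ) (x y : S Λ H), EAg l x.1 y.1 → (g x).1 l = (g y).1 l

/-- The cocycle of `g` at level `l` only depends on coordinates `> l`. -/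
def SliceC (g : Equiv.Perm (S Λ H)) : Prop :=
  ∀ (l : Λ) (x y : S Λ H), SAg l x.1 y.1 → cc g l x = cc g l y

lemma sag_congr {l : Λ} {x y : S Λ H} (t : ∀ m, H m) (hxy : SAg l x.1 y.1) :
    SAg l x.1 t ↔ SAg l y.1 t :=
  ⟨fun hs => (hxy.symm).trans hs, fun hs => hxy.trans hs⟩

lemma coordEq_zeta (l : Λ) (t : ∀ m, H m) (h : H l) : CoordEq (zeta l t h) := by
  intro m x y hxy
  rcases eq_or_ne m l with rfl | hne
  · rw [zeta_apply_self, zeta_apply_self]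
    have hsag : SAg m x.1 y.1 := fun n hn => hxy n hn.le
    rw [hxy m le_rfl]
    by_cases hc : SAg m x.1 t
    · rw [if_pos hc, if_pos ((sag_congr t hsag).1 hc)]
    · rw [if_neg hc, if_neg (fun hy => hc ((sag_congr t hsag).2 hy))]
  · rw [zeta_apply_ne _ _ _ _ hne, zeta_apply_ne _ _ _ _ hne]
    exact hxy m le_rfl

lemma sliceC_zeta (l : Λ) (t : ∀ m, H m) (h : H l) : SliceC (zeta l t h) := by
  intro m x y hxy
  rcases eq_or_ne m l with rfl | hne
  · rw [cc_zeta_self, cc_zeta_self]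
    by_cases hc : SAg m x.1 t
    · rw [if_pos hc, if_pos ((sag_congr t hxy).1 hc)]
    · rw [if_neg hc, if_neg (fun hy => hc ((sag_congr t hxy).2 hy))]
  · rw [cc_zeta_ne _ _ _ _ hne, cc_zeta_ne _ _ _ _ hne]

lemma CoordEq.mul {g g' : Equiv.Perm (S Λ H)} (h1 : CoordEq g) (h2 : CoordEq g') :
    CoordEq (g * g') := by
  intro l x y hxy
  show (g (g' x)).1 l = (g (g' y)).1 l
  refine h1 l _ _ ?_
  intro m hm
  exact h2 m x y (fun n hn => hxy n (le_trans hm hn))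

lemma SliceC.mul {g g' : Equiv.Perm (S Λ H)} (h1 : SliceC g) (h2 : SliceC g')
    (hc2 : CoordEq g') : SliceC (g * g') := by
  intro l x y hxy
  rw [cc_mul, cc_mul, h2 l x y hxy]
  congr 1
  refine h1 l _ _ ?_
  intro m hm
  exact hc2 m x y (fun n hn => hxy n (lt_of_lt_of_le hm hn))

lemma wr_coordEq_sliceC {g : Equiv.Perm (S Λ H)} (hg : g ∈ Wr Λ H) :
    (CoordEq g ∧ SliceC g) ∧ (CoordEq g⁻¹ ∧ SliceC g⁻¹) := by
  refine Subgroup.closure_induction ?_ ?_ ?_ ?_ hg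
  · rintro e ⟨l, h, rfl⟩
    rw [xi_eq_zeta]
    constructor
    · exact ⟨coordEq_zeta _ _ _, sliceC_zeta _ _ _⟩
    · rw [zeta_inv]
      exact ⟨coordEq_zeta _ _ _, sliceC_zeta _ _ _⟩
  · constructor
    · exact ⟨fun l x y h => h l le_rfl, fun l x y h => by simp [cc_one]⟩
    · rw [inv_one]
      exact ⟨fun l x y h => h l le_rfl, fun l x y h => by simp [cc_one]⟩
  · rintro a b _ _ ⟨⟨ha1, ha2⟩, ⟨ha3, ha4⟩⟩ ⟨⟨hb1, hb2⟩, ⟨hb3, hb4⟩⟩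
    constructor
    · exact ⟨ha1.mul hb1, ha2.mul hb2 hb1⟩
    · rw [mul_inv_rev]
      exact ⟨hb3.mul ha3, hb4.mul ha4 ha3⟩
  · rintro a _ ⟨h1, h2⟩
    rw [inv_inv]
    exact ⟨h2, h1⟩

lemma wr_coordEq {g : Equiv.Perm (S Λ H)} (hg : g ∈ Wr Λ H) : CoordEq g :=
  (wr_coordEq_sliceC hg).1.1

lemma wr_sliceC {g : Equiv.Perm (S Λ H)} (hg : g ∈ Wr Λ H) : SliceC g :=
  (wr_coordEq_sliceC hg).1.2

/-- The set of active coordinates of a permutation of `S`. -/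
def Act (g : Equiv.Perm (S Λ H)) : Set Λ := {l | ∃ x : S Λ H, (g x).1 l ≠ x.1 l}

lemma act_fix {g : Equiv.Perm (S Λ H)} {l : Λ} (hl : l ∉ Act g) (x : S Λ H) :
    (g x).1 l = x.1 l := by
  by_contra hne
  exact hl ⟨x, hne⟩

lemma eq_one_of_act_empty {g : Equiv.Perm (S Λ H)} (h : Act g = ∅) : g = 1 := by
  refine Equiv.ext fun x => Subtype.ext ?_
  funext m
  have : m ∉ Act g := by rw [h]; exact Set.notMem_empty m
  exact act_fix this x

lemma act_mul_subset (g g' : Equiv.Perm (S Λ H)) : Act (g * g') ⊆ Act g ∪ Act g' := by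
  intro l hl
  by_contra hc
  rw [Set.mem_union] at hc
  push_neg at hc
  obtain ⟨x, hx⟩ := hl
  refine hx ?_
  show (g (g' x)).1 l = x.1 l
  rw [act_fix hc.1, act_fix hc.2]

lemma act_inv (g : Equiv.Perm (S Λ H)) : Act g⁻¹ = Act g := by
  have key : ∀ h : Equiv.Perm (S Λ H), Act h⁻¹ ⊆ Act h := by
    intro h l hl
    obtain ⟨x, hx⟩ := hl
    refine ⟨h⁻¹ x, ?_⟩
    rw [show h (h⁻¹ x) = x from Equiv.apply_symm_apply h x]
    exact fun hc => hx hc.symm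
  refine Set.Subset.antisymm (key g) ?_
  have := key g⁻¹
  rwa [inv_inv] at this

lemma act_zeta_subset (l : Λ) (t : ∀ m, H m) (h : H l) : Act (zeta l t h) ⊆ {l} := by
  intro m hm
  obtain ⟨x, hx⟩ := hm
  by_contra hne
  exact hx (zeta_apply_ne _ _ _ _ (by simpa using hne))

lemma act_finite {g : Equiv.Perm (S Λ H)} (hg : g ∈ Wr Λ H) : (Act g).Finite := by
  refine Subgroup.closure_induction ?_ ?_ ?_ ?_ hg
  · rintro e ⟨l, h, rfl⟩
    rw [xi_eq_zeta]
    exact (Set.finite_singleton l).subset (act_zeta_subset _ _ _)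
  · refine Set.Finite.subset (Set.finite_empty) ?_
    intro l hl
    obtain ⟨x, hx⟩ := hl
    exact hx rfl
  · intro a b _ _ ha hb
    exact (ha.union hb).subset (act_mul_subset a b)
  · intro a _ ha
    rwa [act_inv]

/-- `t` is a normalized slice at level `l`: all coordinates not above `l` are trivial. -/
def Nrm (l : Λ) (t : S Λ H) : Prop := ∀ m, ¬ l < m → t.1 m = 1

lemma nrm_eq {l : Λ} {t t' : S Λ H} (ht : Nrm l t) (ht' : Nrm l t')
    (hs : SAg l t.1 t'.1) : t = t' := by
  refine Subtype.ext (funext fun m => ?_)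
  by_cases hm : l < m
  · exact hs m hm
  · rw [ht m hm, ht' m hm]

/-- Truncation of a configuration to its coordinates above `l`. -/
def truncS (l : Λ) (x : S Λ H) : S Λ H :=
  ⟨fun m => if l < m then x.1 m else 1, x.2.subset (by
    intro m hm
    simp only [supp, Set.mem_setOf_eq] at hm ⊢
    by_cases h : l < m
    · rwa [if_pos h] at hm
    · exact absurd (if_neg h) hm)⟩

lemma truncS_nrm (l : Λ) (x : S Λ H) : Nrm l (truncS l x) := fun m hm => if_neg hm

lemma truncS_sag (l : Λ) (x : S Λ H) : SAg l (truncS l x).1 x.1 := fun m hm => if_pos hm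

/-- The set of bad (active) normalized slices of `g` at level `l`. -/
def bad (g : Equiv.Perm (S Λ H)) (l : Λ) : Set (S Λ H) :=
  {t | Nrm l t ∧ cc g l t ≠ 1}

lemma bad_finite {g : Equiv.Perm (S Λ H)} (hg : g ∈ Wr Λ H) (l : Λ) :
    (bad g l).Finite := by
  revert l
  refine Subgroup.closure_induction (k := {e | ∃ (l : Λ) (h : H l), e = xi H l h})
    (p := fun g _ => ∀ l, (bad g l).Finite) ?_ ?_ ?_ ?_ hg
  · rintro e ⟨l', h, rfl⟩ l
    rw [xi_eq_zeta]
    rcases eq_or_ne l l' with rfl | hne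
    · refine Set.Subsingleton.finite ?_
      rintro t ⟨ht1, ht2⟩ t' ⟨ht'1, ht'2⟩
      have hsag : ∀ (s : S Λ H), Nrm l s → cc (zeta l (fun _ => (1 : _)) h) l s ≠ 1 →
          SAg l s.1 (fun _ => 1) := by
        intro s _ hcs
        rw [cc_zeta_self] at hcs
        by_contra hc
        rw [if_neg hc] at hcs
        exact hcs rfl
      exact nrm_eq ht1 ht'1 ((hsag t ht1 ht2).trans (hsag t' ht'1 ht'2).symm)
    · refine Set.Finite.subset Set.finite_empty ?_
      rintro t ⟨_, ht2⟩
      exact ht2 (cc_zeta_ne _ _ _ _ hne)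
  · intro l
    refine Set.Finite.subset Set.finite_empty ?_
    rintro t ⟨_, ht2⟩
    exact ht2 (cc_one l t)
  · intro a b ha hb iha ihb l
    have hsc : SliceC a := wr_sliceC ha
    have hce : CoordEq b⁻¹ := wr_coordEq (Subgroup.inv_mem _ hb)
    have hA : {t : S Λ H | Nrm l t ∧ truncS l (b t) ∈ bad a l}.Finite := by
      have hinj : Set.InjOn (fun t => truncS l (b t))
          {t : S Λ H | Nrm l t ∧ truncS l (b t) ∈ bad a l} := by
        intro t₁ h₁ t₂ h₂ heq
        refine Subtype.ext (funext fun m => ?_)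
        by_cases hm : l < m
        · have e1 : (b⁻¹ (b t₁)).1 m = (b⁻¹ (b t₂)).1 m := by
            refine hce m (b t₁) (b t₂) ?_
            intro n hn
            have hln : l < n := lt_of_lt_of_le hm hn
            have h2 := congrArg (fun s : S Λ H => s.1 n) heq
            simpa [truncS, if_pos hln] using h2
          simpa using e1
        · rw [h₁.1 m hm, h₂.1 m hm]
      have himage : (fun t => truncS l (b t)) ''
          {t : S Λ H | Nrm l t ∧ truncS l (b t) ∈ bad a l} ⊆ bad a l := by
        rintro _ ⟨t, ht, rfl⟩
        exact ht.2
      exact Set.Finite.of_finite_image ((iha l).subset himage) hinj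
    have hsub : bad (a * b) l ⊆ bad b l ∪
        {t : S Λ H | Nrm l t ∧ truncS l (b t) ∈ bad a l} := by
      rintro t ⟨ht1, ht2⟩
      rw [cc_mul] at ht2
      by_cases hcb : cc b l t = 1
      · right
        refine ⟨ht1, truncS_nrm l (b t), ?_⟩
        rw [hcb, mul_one] at ht2
        rw [hsc l (truncS l (b t)) (b t) (truncS_sag l (b t))]
        exact ht2
      · exact Or.inl ⟨ht1, hcb⟩
    exact ((ihb l).union hA).subset hsub
  · intro a ha ih l
    have hsc : SliceC a := wr_sliceC ha
    have hceA : CoordEq a := wr_coordEq ha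
    have hA : {t : S Λ H | Nrm l t ∧ truncS l (a⁻¹ t) ∈ bad a l}.Finite := by
      have hinj : Set.InjOn (fun t => truncS l (a⁻¹ t))
          {t : S Λ H | Nrm l t ∧ truncS l (a⁻¹ t) ∈ bad a l} := by
        intro t₁ h₁ t₂ h₂ heq
        refine Subtype.ext (funext fun m => ?_)
        by_cases hm : l < m
        · have e1 : (a (a⁻¹ t₁)).1 m = (a (a⁻¹ t₂)).1 m := by
            refine hceA m (a⁻¹ t₁) (a⁻¹ t₂) ?_
            intro n hn
            have hln : l < n := lt_of_lt_of_le hm hn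
            have h2 := congrArg (fun s : S Λ H => s.1 n) heq
            simpa [truncS, if_pos hln] using h2
          simpa using e1
        · rw [h₁.1 m hm, h₂.1 m hm]
      have himage : (fun t => truncS l (a⁻¹ t)) ''
          {t : S Λ H | Nrm l t ∧ truncS l (a⁻¹ t) ∈ bad a l} ⊆ bad a l := by
        rintro _ ⟨t, ht, rfl⟩
        exact ht.2
      exact Set.Finite.of_finite_image ((ih l).subset himage) hinj
    have hsub : bad a⁻¹ l ⊆ {t : S Λ H | Nrm l t ∧ truncS l (a⁻¹ t) ∈ bad a l} := by
      rintro t ⟨ht1, ht2⟩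
      rw [cc_inv] at ht2
      refine ⟨ht1, truncS_nrm _ _, ?_⟩
      rw [hsc l (truncS l (a⁻¹ t)) (a⁻¹ t) (truncS_sag _ _)]
      exact fun hc => ht2 (by rw [hc, inv_one])
    exact hA.subset hsub

end GW

end

noncomputable section

namespace GW

open Equiv

set_option linter.unusedSectionVars false
set_option maxHeartbeats 1000000

variable {Λ : Type*} [LinearOrder Λ] {H : Λ → Type*} [∀ l, Group (H l)]

/-- Generators of level contained in `U`. -/
def zetaGens (U : Set Λ) : Set (Equiv.Perm (S Λ H)) :=
  {e | ∃ (l : Λ) (t : S Λ H) (h : H l), l ∈ U ∧ e = zeta l t.1 h}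

lemma zetaGens_le_Wr (U : Set Λ) :
    Subgroup.closure (zetaGens (Λ := Λ) (H := H) U) ≤ Wr Λ H := by
  rw [Subgroup.closure_le]
  rintro e ⟨l, t, h, _, rfl⟩
  exact zeta_mem_Wr' l t h

lemma mem_closure_zetaGens (U : Set Λ) {g : Equiv.Perm (S Λ H)} (hg : g ∈ Wr Λ H)
    (hact : Act g ⊆ U) : g ∈ Subgroup.closure (zetaGens U) := by
  have aux : ∀ (n : ℕ) (F : Finset Λ), F.card ≤ n → ↑F ⊆ U →
      ∀ g : Equiv.Perm (S Λ H), g ∈ Wr Λ H → Act g ⊆ ↑F →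
      g ∈ Subgroup.closure (zetaGens U) := by
    intro n
    induction n with
    | zero =>
      intro F hcard _ g _ hactg
      rw [Finset.card_eq_zero.1 (Nat.le_zero.1 hcard)] at hactg
      have : Act g = ∅ := by
        refine Set.eq_empty_iff_forall_notMem.2 fun m hm => ?_
        simpa using hactg hm
      rw [eq_one_of_act_empty this]
      exact Subgroup.one_mem _
    | succ n ih =>
      intro F hcard hFU g hgWr hactg
      rcases F.eq_empty_or_nonempty with rfl | hne
      · have : Act g = ∅ := by
          refine Set.eq_empty_iff_forall_notMem.2 fun m hm => ?_
          simpa using hactg hm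
        rw [eq_one_of_act_empty this]
        exact Subgroup.one_mem _
      set l₀ := F.max' hne with hl₀
      have hl₀F : l₀ ∈ F := F.max'_mem hne
      -- if the bad set at l₀ is empty, the level l₀ is inactive and we can shrink F
      have base : ∀ g : Equiv.Perm (S Λ H), g ∈ Wr Λ H → Act g ⊆ ↑F → bad g l₀ = ∅ →
          g ∈ Subgroup.closure (zetaGens U) := by
        intro g hgWr hactg hbad
        have hfix : l₀ ∉ Act g := by
          rintro ⟨x, hx⟩
          have h1 : cc g l₀ (truncS l₀ x) = 1 := by
            by_contra hc
            rw [Set.eq_empty_iff_forall_notMem] at hbad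
            exact hbad _ ⟨truncS_nrm l₀ x, hc⟩
          have h2 : cc g l₀ x = 1 := by
            rw [← wr_sliceC hgWr l₀ (truncS l₀ x) x (truncS_sag l₀ x)]
            exact h1
          refine hx ?_
          rw [cc_spec, h2, one_mul]
        have hsub : Act g ⊆ ↑(F.erase l₀) := by
          intro m hm
          have hmF := hactg hm
          simp only [Finset.coe_erase, Set.mem_diff, Set.mem_singleton_iff]
          exact ⟨hmF, fun hc => hfix (hc ▸ hm)⟩
        refine ih (F.erase l₀) ?_ (fun m hm => hFU (Finset.erase_subset _ _ hm)) g hgWr hsub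
        have := Finset.card_erase_of_mem hl₀F
        have hpos : 0 < F.card := Finset.card_pos.2 hne
        omega
      have inner : ∀ (k : ℕ) (g : Equiv.Perm (S Λ H)), g ∈ Wr Λ H → Act g ⊆ ↑F →
          (bad g l₀).ncard ≤ k → g ∈ Subgroup.closure (zetaGens U) := by
        intro k
        induction k with
        | zero =>
          intro g hgWr hactg hnc
          exact base g hgWr hactg ((Set.ncard_eq_zero (bad_finite hgWr l₀)).1
            (Nat.le_zero.1 hnc))
        | succ k ihk =>
          intro g hgWr hactg hnc
          rcases (bad g l₀).eq_empty_or_nonempty with hemp | ⟨t, ht⟩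
          · exact base g hgWr hactg hemp
          set cv := cc g l₀ t with hcv
          set z := zeta l₀ t.1 cv with hz
          have hzWr : z ∈ Wr Λ H := zeta_mem_Wr' l₀ t cv
          have hzcl : z ∈ Subgroup.closure (zetaGens U) :=
            Subgroup.subset_closure ⟨l₀, t, cv, hFU hl₀F, rfl⟩
          set g' := z⁻¹ * g with hg'
          have hg'Wr : g' ∈ Wr Λ H := Subgroup.mul_mem _ (Subgroup.inv_mem _ hzWr) hgWr
          have hact' : Act g' ⊆ ↑F := by
            refine (act_mul_subset _ _).trans ?_
            intro m hm
            rcases hm with hm | hm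
            · rw [act_inv] at hm
              have := act_zeta_subset l₀ t.1 cv hm
              simp only [Set.mem_singleton_iff] at this
              rw [this]
              exact hl₀F
            · exact hactg hm
          -- fixed coordinates above l₀
          have hgfix : ∀ (s : S Λ H), SAg l₀ (g s).1 s.1 := by
            intro s m hm
            have hmF : m ∉ (F : Set Λ) := by
              intro hc
              exact absurd (F.le_max' m hc) (not_le.2 hm)
            exact act_fix (fun hc => hmF (hactg hc)) s
          have hbad' : bad g' l₀ ⊆ bad g l₀ \ {t} := by
            rintro s ⟨hs1, hs2⟩
            have hcc : cc g' l₀ s = cc z⁻¹ l₀ (g s) * cc g l₀ s := cc_mul _ _ _ _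
            have hccz : ∀ y : S Λ H, cc z⁻¹ l₀ y = if SAg l₀ y.1 t.1 then cv⁻¹ else 1 := by
              intro y
              rw [hz, zeta_inv]
              exact cc_zeta_self _ _ _ _
            have hsiff : SAg l₀ (g s).1 t.1 ↔ SAg l₀ s.1 t.1 := sag_congr t.1 (hgfix s)
            have hsne : s ≠ t := by
              rintro rfl
              rw [hcc, hccz, if_pos (hsiff.2 (SAg.refl _ _)), ← hcv, inv_mul_cancel] at hs2
              exact hs2 rfl
            have hnsag : ¬ SAg l₀ s.1 t.1 := by
              intro hc
              exact hsne (nrm_eq hs1 ht.1 hc)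
            rw [hcc, hccz, if_neg (fun hc => hnsag (hsiff.1 hc)), one_mul] at hs2
            exact ⟨⟨hs1, hs2⟩, hsne⟩
          have hnc' : (bad g' l₀).ncard ≤ k := by
            have h1 : (bad g' l₀).ncard ≤ (bad g l₀ \ {t}).ncard :=
              Set.ncard_le_ncard hbad' ((bad_finite hgWr l₀).diff)
            have h2 : (bad g l₀ \ {t}).ncard < (bad g l₀).ncard :=
              Set.ncard_diff_singleton_lt_of_mem ht (bad_finite hgWr l₀)
            omega
          have hg'cl := ihk g' hg'Wr hact' hnc'
          have : g = z * g' := by rw [hg', mul_inv_cancel_left]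
          rw [this]
          exact Subgroup.mul_mem _ hzcl hg'cl
      exact inner (bad g l₀).ncard g hgWr hactg le_rfl
  have hF : (Act g).Finite := act_finite hg
  refine aux hF.toFinset.card hF.toFinset le_rfl ?_ g hg ?_
  · intro m hm
    rw [Set.Finite.coe_toFinset] at hm
    exact hact hm
  · intro m hm
    rw [Set.Finite.coe_toFinset]
    exact hm

/-- Slice transport: an element of the wreath product acting only above `l₀`,
carrying the slice of `t` to the slice of `t'`. -/
lemma slice_transport (l₀ : Λ) (t t' : S Λ H) :
    ∃ g : Equiv.Perm (S Λ H), g ∈ Wr Λ H ∧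
      (∀ (x : S Λ H) m, ¬ l₀ < m → (g x).1 m = x.1 m) ∧
      (∀ z : S Λ H, SAg l₀ z.1 t.1 ↔ SAg l₀ (g z).1 t'.1) := by
  have aux : ∀ (n : ℕ) (t t' : S Λ H), {m | l₀ < m ∧ t.1 m ≠ t'.1 m}.ncard ≤ n →
      ∃ g : Equiv.Perm (S Λ H), g ∈ Wr Λ H ∧
      (∀ (x : S Λ H) m, ¬ l₀ < m → (g x).1 m = x.1 m) ∧
      (∀ z : S Λ H, SAg l₀ z.1 t.1 ↔ SAg l₀ (g z).1 t'.1) := by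
    intro n
    have hfin : ∀ t t' : S Λ H, {m | l₀ < m ∧ t.1 m ≠ t'.1 m}.Finite := by
      intro t t'
      refine (t.2.union t'.2).subset ?_
      rintro m ⟨_, hm2⟩
      by_cases h : t.1 m = 1
      · right
        intro hc
        exact hm2 (h.trans (by rw [hc]))
      · exact Or.inl h
    induction n with
    | zero =>
      intro t t' hcard
      have hemp : {m | l₀ < m ∧ t.1 m ≠ t'.1 m} = ∅ :=
        (Set.ncard_eq_zero (hfin t t')).1 (Nat.le_zero.1 hcard)
      have hag : SAg l₀ t.1 t'.1 := by
        intro m hm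
        by_contra hc
        exact absurd (Set.eq_empty_iff_forall_notMem.1 hemp m) (fun h => h ⟨hm, hc⟩)
      refine ⟨1, Subgroup.one_mem _, fun x m _ => rfl, fun z => ?_⟩
      show SAg l₀ z.1 t.1 ↔ SAg l₀ z.1 t'.1
      constructor
      · intro h; exact h.trans hag
      · intro h; exact h.trans hag.symm
    | succ n ihn =>
      intro t t' hcard
      rcases {m | l₀ < m ∧ t.1 m ≠ t'.1 m}.eq_empty_or_nonempty with hemp | ⟨u, hu⟩
      · exact ihn t t' (by rw [hemp]; simp)
      have hul : l₀ < u := hu.1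
      set δ := t'.1 u * (t.1 u)⁻¹ with hδ
      set g₁ := zeta u t.1 δ with hg₁
      set t'' : S Λ H := ⟨Function.update t.1 u (t'.1 u), by
        refine (t.2.union t'.2).subset ?_
        intro m hm
        rcases eq_or_ne m u with rfl | hne
        · right
          simpa [supp, Function.update_self] using hm
        · left
          simpa [supp, Function.update_of_ne hne] using hm⟩ with ht''
      have ht''u : t''.1 u = t'.1 u := Function.update_self _ _ _
      have ht''ne : ∀ m, m ≠ u → t''.1 m = t.1 m := fun m hm => Function.update_of_ne hm _ _
      have hkey : zetaFun u t.1 δ t.1 = t''.1 := by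
        funext m
        rcases eq_or_ne m u with rfl | hne
        · rw [zetaFun_apply_self, if_pos (SAg.refl _ _), ht''u, hδ, inv_mul_cancel_right]
        · rw [zetaFun_apply_ne _ _ _ _ hne, ht''ne m hne]
      have hiff₁ : ∀ z : S Λ H, SAg l₀ z.1 t.1 ↔ SAg l₀ (g₁ z).1 t''.1 := by
        intro z
        have := sag_zeta_iff hul t.1 t.1 δ z
        rwa [hkey] at this
      have hdif : {m | l₀ < m ∧ t''.1 m ≠ t'.1 m} ⊆
          {m | l₀ < m ∧ t.1 m ≠ t'.1 m} \ {u} := by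
        rintro m ⟨hm1, hm2⟩
        rcases eq_or_ne m u with rfl | hne
        · rw [ht''u] at hm2
          exact absurd rfl hm2
        · exact ⟨⟨hm1, by rwa [ht''ne m hne] at hm2⟩, hne⟩
      have hnc : {m | l₀ < m ∧ t''.1 m ≠ t'.1 m}.ncard ≤ n := by
        have h1 : {m | l₀ < m ∧ t''.1 m ≠ t'.1 m}.ncard ≤
            ({m | l₀ < m ∧ t.1 m ≠ t'.1 m} \ {u}).ncard :=
          Set.ncard_le_ncard hdif ((hfin t t').diff)
        have h2 : ({m | l₀ < m ∧ t.1 m ≠ t'.1 m} \ {u}).ncard <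
            {m | l₀ < m ∧ t.1 m ≠ t'.1 m}.ncard :=
          Set.ncard_diff_singleton_lt_of_mem hu (hfin t t')
        omega
      obtain ⟨g₂, hg₂Wr, hg₂fix, hg₂iff⟩ := ihn t'' t' hnc
      refine ⟨g₂ * g₁, Subgroup.mul_mem _ hg₂Wr (zeta_mem_Wr' u t δ), ?_, ?_⟩
      · intro x m hm
        show (g₂ (g₁ x)).1 m = x.1 m
        rw [hg₂fix (g₁ x) m hm]
        exact zeta_apply_ne _ _ _ _ (fun hc => hm (hc ▸ hul))
      · intro z
        rw [hiff₁ z]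
        exact hg₂iff (g₁ z)
  exact aux {m | l₀ < m ∧ t.1 m ≠ t'.1 m}.ncard t t' le_rfl

end GW

end

noncomputable section

namespace GW

open Equiv

set_option linter.unusedSectionVars false
set_option maxHeartbeats 1000000

variable {Λ : Type*} [LinearOrder Λ] {H : Λ → Type*} [∀ l, Group (H l)]

/-- `g` is concentrated on the set of configurations agreeing with `t` at and above `l₀`. -/
def Conc (l₀ : Λ) (t : S Λ H) (g : Equiv.Perm (S Λ H)) : Prop :=
  ∀ z : S Λ H, ¬ EAg l₀ z.1 t.1 → g z = z

lemma Conc.inv {l₀ : Λ} {t : S Λ H} {g : Equiv.Perm (S Λ H)} (hg : Conc l₀ t g) :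
    Conc l₀ t g⁻¹ := by
  intro z hz
  have := hg z hz
  calc g⁻¹ z = g⁻¹ (g z) := by rw [this]
  _ = z := Equiv.symm_apply_apply _ _

lemma Conc.maps {l₀ : Λ} {t : S Λ H} {g : Equiv.Perm (S Λ H)} (hg : Conc l₀ t g)
    {z : S Λ H} (hz : EAg l₀ z.1 t.1) : EAg l₀ (g z).1 t.1 := by
  by_contra hc
  have h1 : g (g z) = g z := hg (g z) hc
  have h2 : g z = z := g.injective h1
  exact hc (by rw [h2]; exact hz)

lemma conc_commute {l₀ : Λ} {t t' : S Λ H} {a b : Equiv.Perm (S Λ H)}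
    (hd : ∃ m, l₀ ≤ m ∧ t.1 m ≠ t'.1 m) (ha : Conc l₀ t a) (hb : Conc l₀ t' b) :
    Commute a b := by
  obtain ⟨m₀, hm₀, hne⟩ := hd
  have hdisj : ∀ z : S Λ H, EAg l₀ z.1 t.1 → ¬ EAg l₀ z.1 t'.1 := by
    intro z h1 h2
    exact hne ((h1 m₀ hm₀).symm.trans (h2 m₀ hm₀))
  have hdisj' : ∀ z : S Λ H, EAg l₀ z.1 t'.1 → ¬ EAg l₀ z.1 t.1 :=
    fun z h2 h1 => hdisj z h1 h2
  refine Equiv.ext fun z => ?_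
  show a (b z) = b (a z)
  by_cases h1 : EAg l₀ z.1 t.1
  · rw [hb z (hdisj z h1), hb (a z) (hdisj (a z) (ha.maps h1))]
  · by_cases h2 : EAg l₀ z.1 t'.1
    · rw [ha z h1, ha (b z) (fun hc => hdisj' (b z) (hb.maps h2) hc)]
    · rw [ha z h1, hb z h2, ha z h1]

lemma zeta_apply_of_not_sag {l : Λ} {s : ∀ m, H m} {x : S Λ H} (h : H l)
    (hns : ¬ SAg l x.1 s) : zeta l s h x = x := by
  refine Subtype.ext ?_
  show zetaFun l s h x.1 = x.1
  rw [zetaFun, if_neg hns, Function.update_eq_self]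

lemma conc_zeta {l₀ l : Λ} (hl : l < l₀) {t : S Λ H} {s : ∀ m, H m}
    (hst : ∀ m, l₀ ≤ m → s m = t.1 m) (h : H l) : Conc l₀ t (zeta l s h) := by
  intro z hz
  refine zeta_apply_of_not_sag h ?_
  intro hc
  refine hz ?_
  intro m hm
  rw [hc m (lt_of_lt_of_le hl hm), hst m hm]

lemma sag_zeta_self (l : Λ) (t : ∀ m, H m) (h : H l) (x : S Λ H) :
    SAg l (zeta l t h x).1 x.1 := fun m hm => zeta_apply_ne _ _ _ _ hm.ne'

/-- Update at one coordinate, as an element of `S`. -/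
def updS (t : S Λ H) (l : Λ) (a : H l) : S Λ H :=
  ⟨Function.update t.1 l a, (t.2.insert l).subset (by
    intro m hm
    rcases eq_or_ne m l with rfl | hne
    · exact Set.mem_insert _ _
    · refine Set.mem_insert_of_mem _ ?_
      simpa [supp, Function.update_of_ne hne] using hm)⟩

lemma updS_self (t : S Λ H) (l : Λ) (a : H l) : (updS t l a).1 l = a :=
  Function.update_self _ _ _

lemma updS_ne (t : S Λ H) (l : Λ) (a : H l) {m : Λ} (hm : m ≠ l) :
    (updS t l a).1 m = t.1 m := Function.update_of_ne hm _ _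

/-- Conjugating an element concentrated on the slice of `t` by an element with
cocycle `σ` at `t` concentrates it on the shifted slice. -/
lemma conc_conj {l₀ : Λ} {t : S Λ H} {p w : Equiv.Perm (S Λ H)} (hpWr : p ∈ Wr Λ H)
    (hpfix : ∀ (x : S Λ H) (m : Λ), l₀ < m → (p x).1 m = x.1 m)
    (hw : Conc l₀ t w) : Conc l₀ (updS t l₀ (cc p l₀ t * t.1 l₀)) (p * w * p⁻¹) := by
  intro z hz
  have hy : ¬ EAg l₀ (p⁻¹ z).1 t.1 := by
    intro hy
    refine hz ?_
    have hzy : z = p (p⁻¹ z) := (Equiv.apply_symm_apply p z).symm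
    intro m hm
    rcases lt_or_eq_of_le hm with hlt | heq
    · rw [hzy, hpfix (p⁻¹ z) m hlt, updS_ne t l₀ _ hlt.ne']
      exact hy m hm
    · subst heq
      rw [hzy, updS_self, cc_spec, hy l₀ le_rfl]
      congr 1
      exact wr_sliceC hpWr l₀ (p⁻¹ z) t (fun n hn => hy n hn.le)
  show p (w (p⁻¹ z)) = z
  rw [hw (p⁻¹ z) hy, show p (p⁻¹ z) = z from Equiv.apply_symm_apply p z]

open scoped commutatorElement

/-- The group-algebra trick for commutators of disjointly supported products. -/
lemma comm_conj_trick {G : Type*} [Group G] (q u r v : G) (h1 : Commute u r)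
    (h2 : Commute u v) (h3 : Commute v q) :
    (q * u) * (r * v) * (q * u)⁻¹ * (r * v)⁻¹ = q * r * q⁻¹ * r⁻¹ := by
  have s1 : ∀ X : G, u * (r * X) = r * (u * X) := fun X => by
    rw [← mul_assoc, h1.eq, mul_assoc]
  have s2 : ∀ X : G, u * (v * X) = v * (u * X) := fun X => by
    rw [← mul_assoc, h2.eq, mul_assoc]
  have s3 : ∀ X : G, v * (q⁻¹ * X) = q⁻¹ * (v * X) := fun X => by
    rw [← mul_assoc, h3.inv_right.eq, mul_assoc]
  simp only [mul_inv_rev, mul_assoc]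
  rw [s1, s2, mul_inv_cancel_left, s3, mul_inv_cancel_left]

/-- In a nonabelian simple group, any subgroup containing all commutators is everything. -/
lemma perfect_subgroup {G : Type*} [Group G] [IsSimpleGroup G]
    (hna : ∃ a b : G, a * b ≠ b * a) (K : Subgroup G) (hK : ∀ a b : G, ⁅a, b⁆ ∈ K) :
    K = ⊤ := by
  obtain ⟨a, b, hab⟩ := hna
  have hcomm : commutator G = ⊤ := by
    rcases (Subgroup.commutator_normal (⊤ : Subgroup G) ⊤).eq_bot_or_eq_top with hbot | htop
    any_goals rw [← commutator_def] at *
    · exfalso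
      have : ⁅a, b⁆ ∈ commutator G :=
        Subgroup.commutator_mem_commutator (Subgroup.mem_top a) (Subgroup.mem_top b)
      rw [hbot, Subgroup.mem_bot, commutatorElement_eq_one_iff_commute] at this
      exact hab this
    · exact htop
  have h1 : (⊤ : Subgroup G) ≤ K := by
    rw [← hcomm, commutator_eq_closure, Subgroup.closure_le]
    rintro x ⟨a', b', rfl⟩
    exact hK a' b'
  exact top_le_iff.1 h1

end GW

end

noncomputable section

namespace GW

open Equiv
open scoped commutatorElement

set_option linter.unusedSectionVars false
set_option maxHeartbeats 4000000

variable {Λ : Type*} [LinearOrder Λ] {H : Λ → Type*} [∀ l, Group (H l)]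

theorem classify (hS : ∀ l : Λ, IsSimpleGroup (H l))
    (hNA : ∀ l : Λ, ∃ a b : H l, a * b ≠ b * a)
    (N : Subgroup ↥(Wr Λ H)) (hN : N.Normal) (l₀ : Λ)
    (hfixN : ∀ p ∈ N.map (Wr Λ H).subtype, ∀ (x : S Λ H) (m : Λ), l₀ < m →
      (p x).1 m = x.1 m)
    (hactN : ∃ p ∈ N.map (Wr Λ H).subtype, ∃ x : S Λ H, (p x).1 l₀ ≠ x.1 l₀) :
    N = D H {l : Λ | l ≤ l₀} := by
  set NT := N.map (Wr Λ H).subtype with hNT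
  have hNTWr : ∀ p ∈ NT, p ∈ Wr Λ H := by
    rintro p ⟨n, _, rfl⟩
    exact n.2
  have hconj : ∀ p ∈ NT, ∀ w, w ∈ Wr Λ H → w * p * w⁻¹ ∈ NT := by
    rintro p ⟨n, hn, rfl⟩ w hw
    exact ⟨⟨w, hw⟩ * n * ⟨w, hw⟩⁻¹, hN.conj_mem n hn ⟨w, hw⟩, rfl⟩
  -- a general fixing fact including inverses
  have hfix' : ∀ p ∈ NT, ∀ (x : S Λ H) (m : Λ), l₀ < m → (p x).1 m = x.1 m := hfixN
  -- slice constancy shortcut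
  have hsagNT : ∀ p ∈ NT, ∀ x : S Λ H, SAg l₀ (p x).1 x.1 :=
    fun p hp x m hm => hfix' p hp x m hm
  have hccNT_inv : ∀ p ∈ NT, ∀ x : S Λ H, cc p⁻¹ l₀ x = (cc p l₀ x)⁻¹ := by
    intro p hp x
    rw [cc_inv]
    congr 1
    refine wr_sliceC (hNTWr p hp) l₀ (p⁻¹ x) x ?_
    intro m hm
    exact hsagNT p⁻¹ (Subgroup.inv_mem _ hp) x m hm
  -- STEP 1: full top slice group
  have hfull : ∀ (t : S Λ H) (σ : H l₀), ∃ p ∈ NT, cc p l₀ t = σ := by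
    obtain ⟨p₀, hp₀, x₀, hx₀⟩ := hactN
    have hc₀ : cc p₀ l₀ x₀ ≠ 1 := by
      intro hc
      exact hx₀ (by rw [cc_spec, hc, one_mul])
    -- the subgroup of values at x₀
    set A₀ : Subgroup (H l₀) :=
      { carrier := {a | ∃ p ∈ NT, cc p l₀ x₀ = a}
        one_mem' := ⟨1, Subgroup.one_mem _, cc_one _ _⟩
        mul_mem' := by
          rintro a b ⟨p, hp, rfl⟩ ⟨q, hq, rfl⟩
          refine ⟨p * q, Subgroup.mul_mem _ hp hq, ?_⟩
          rw [cc_mul]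
          congr 1
          exact wr_sliceC (hNTWr p hp) l₀ (q x₀) x₀ (fun m hm => hsagNT q hq x₀ m hm)
        inv_mem' := by
          rintro a ⟨p, hp, rfl⟩
          exact ⟨p⁻¹, Subgroup.inv_mem _ hp, hccNT_inv p hp x₀⟩ } with hA₀
    have hA₀normal : A₀.Normal := by
      constructor
      rintro a ⟨p, hp, rfl⟩ j
      set ζ := zeta l₀ x₀.1 j with hζ
      have hζWr : ζ ∈ Wr Λ H := zeta_mem_Wr' l₀ x₀ j
      refine ⟨ζ * p * ζ⁻¹, hconj p hp ζ hζWr, ?_⟩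
      have e1 : cc (ζ * p * ζ⁻¹) l₀ x₀ = cc ζ l₀ (p (ζ⁻¹ x₀)) * cc p l₀ (ζ⁻¹ x₀) *
          cc ζ⁻¹ l₀ x₀ := by
        rw [cc_mul, cc_mul]
      have e2 : cc ζ⁻¹ l₀ x₀ = j⁻¹ := by
        rw [hζ, zeta_inv, cc_zeta_self, if_pos (SAg.refl _ _)]
      have hsag1 : SAg l₀ (ζ⁻¹ x₀).1 x₀.1 := by
        rw [hζ, zeta_inv]
        exact sag_zeta_self _ _ _ _
      have e3 : cc p l₀ (ζ⁻¹ x₀) = cc p l₀ x₀ :=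
        wr_sliceC (hNTWr p hp) l₀ (ζ⁻¹ x₀) x₀ hsag1
      have hsag2 : SAg l₀ (p (ζ⁻¹ x₀)).1 x₀.1 :=
        SAg.trans (fun m hm => hsagNT p hp (ζ⁻¹ x₀) m hm) hsag1
      have e4 : cc ζ l₀ (p (ζ⁻¹ x₀)) = j := by
        rw [hζ, cc_zeta_self, if_pos hsag2]
      rw [e1, e2, e3, e4]
    have hA₀top : A₀ = ⊤ := by
      rcases hA₀normal.eq_bot_or_eq_top with hbot | htop
      · exfalso
        have : cc p₀ l₀ x₀ ∈ A₀ := ⟨p₀, hp₀, rfl⟩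
        rw [hbot, Subgroup.mem_bot] at this
        exact hc₀ this
      · exact htop
    -- transport to arbitrary slices
    intro t σ
    have hmem : σ ∈ A₀ := hA₀top ▸ Subgroup.mem_top σ
    obtain ⟨p, hp, hpσ⟩ := hmem
    obtain ⟨g, hgWr, hgfix, hgiff⟩ := slice_transport l₀ x₀ t
    have hccg : ∀ y : S Λ H, cc g l₀ y = 1 := by
      intro y
      show (g y).1 l₀ * (y.1 l₀)⁻¹ = 1
      rw [hgfix y l₀ (lt_irrefl _), mul_inv_cancel]
    have hccginv : ∀ y : S Λ H, cc g⁻¹ l₀ y = 1 := by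
      intro y
      rw [cc_inv, hccg, inv_one]
    refine ⟨g * p * g⁻¹, hconj p hp g hgWr, ?_⟩
    have e1 : cc (g * p * g⁻¹) l₀ t = cc g l₀ (p (g⁻¹ t)) * cc p l₀ (g⁻¹ t) *
        cc g⁻¹ l₀ t := by
      rw [cc_mul, cc_mul]
    have hsag3 : SAg l₀ (g⁻¹ t).1 x₀.1 := by
      refine (hgiff (g⁻¹ t)).2 ?_
      have : g (g⁻¹ t) = t := Equiv.apply_symm_apply _ _
      rw [this]
      exact SAg.refl _ _
    have e3 : cc p l₀ (g⁻¹ t) = σ := by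
      rw [wr_sliceC (hNTWr p hp) l₀ (g⁻¹ t) x₀ hsag3]
      exact hpσ
    rw [e1, hccg, hccginv, e3, one_mul, mul_one]
  -- STEP 2: commutators of concentrated elements are in NT
  have hcomm : ∀ (t : S Λ H) (q r : Equiv.Perm (S Λ H)), q ∈ Wr Λ H → r ∈ Wr Λ H →
      Conc l₀ t q → Conc l₀ t r → q * r * q⁻¹ * r⁻¹ ∈ NT := by
    intro t q r hqWr hrWr hq hr
    obtain ⟨σ₁, σ₂, hσ⟩ := hNA l₀
    have hσ1 : σ₁ ≠ 1 := by rintro rfl; simp at hσ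
    have hσ2 : σ₂ ≠ 1 := by rintro rfl; simp at hσ
    have hσne : σ₁ ≠ σ₂ := by rintro rfl; exact hσ rfl
    obtain ⟨p, hpNT, hpσ⟩ := hfull t σ₁
    obtain ⟨p', hp'NT, hp'σ⟩ := hfull t σ₂
    set u := p * q⁻¹ * p⁻¹ with hu
    set v := p' * r⁻¹ * p'⁻¹ with hv
    set t₁ := updS t l₀ (σ₁ * t.1 l₀) with ht₁
    set t₂ := updS t l₀ (σ₂ * t.1 l₀) with ht₂
    have hcu : Conc l₀ t₁ u := by
      rw [ht₁, ← hpσ]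
      exact conc_conj (hNTWr p hpNT) (hfix' p hpNT) hq.inv
    have hcv : Conc l₀ t₂ v := by
      rw [ht₂, ← hp'σ]
      exact conc_conj (hNTWr p' hp'NT) (hfix' p' hp'NT) hr.inv
    have hd1 : ∃ m, l₀ ≤ m ∧ t₁.1 m ≠ t.1 m := by
      refine ⟨l₀, le_rfl, ?_⟩
      rw [ht₁, updS_self]
      intro hc
      have h2 : σ₁ * t.1 l₀ = 1 * t.1 l₀ := by rw [one_mul]; exact hc
      exact hσ1 (mul_right_cancel h2)
    have hd2 : ∃ m, l₀ ≤ m ∧ t₂.1 m ≠ t.1 m := by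
      refine ⟨l₀, le_rfl, ?_⟩
      rw [ht₂, updS_self]
      intro hc
      have h2 : σ₂ * t.1 l₀ = 1 * t.1 l₀ := by rw [one_mul]; exact hc
      exact hσ2 (mul_right_cancel h2)
    have hd12 : ∃ m, l₀ ≤ m ∧ t₁.1 m ≠ t₂.1 m := by
      refine ⟨l₀, le_rfl, ?_⟩
      rw [ht₁, ht₂, updS_self, updS_self]
      intro hc
      exact hσne (mul_right_cancel hc)
    have h1 : Commute u r := conc_commute hd1 hcu hr
    have h2 : Commute u v := conc_commute hd12 hcu hcv
    have h3 : Commute v q := (conc_commute hd2 hcv hq)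
    have hE : q * u ∈ NT := by
      have : q * u = (q * p * q⁻¹) * p⁻¹ := by
        rw [hu]
        group
      rw [this]
      exact Subgroup.mul_mem _ (hconj p hpNT q hqWr) (Subgroup.inv_mem _ hpNT)
    have hE' : r * v ∈ NT := by
      have : r * v = (r * p' * r⁻¹) * p'⁻¹ := by
        rw [hv]
        group
      rw [this]
      exact Subgroup.mul_mem _ (hconj p' hp'NT r hrWr) (Subgroup.inv_mem _ hp'NT)
    have hkey : (q * u) * (r * v) * (q * u)⁻¹ * (r * v)⁻¹ = q * r * q⁻¹ * r⁻¹ :=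
      comm_conj_trick q u r v h1 h2 h3
    rw [← hkey]
    exact Subgroup.mul_mem _ (Subgroup.mul_mem _ (Subgroup.mul_mem _ hE hE')
      (Subgroup.inv_mem _ hE)) (Subgroup.inv_mem _ hE')
  -- STEP 3: low zetas are in NT
  have hzlow : ∀ l : Λ, l < l₀ → ∀ (s : S Λ H) (h : H l), zeta l s.1 h ∈ NT := by
    intro l hl s h
    have hconcz : ∀ a : H l, Conc l₀ s (zeta l s.1 a) :=
      fun a => conc_zeta hl (fun m _ => rfl) a
    haveI := hS l
    set K : Subgroup (H l) :=
      { carrier := {a | zeta l s.1 a ∈ NT}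
        one_mem' := by
          show zeta l s.1 (1 : H l) ∈ NT
          rw [zeta_one]
          exact Subgroup.one_mem _
        mul_mem' := by
          intro a b ha hb
          show zeta l s.1 (a * b) ∈ NT
          rw [← zeta_mul_same]
          exact Subgroup.mul_mem _ ha hb
        inv_mem' := by
          intro a ha
          show zeta l s.1 a⁻¹ ∈ NT
          rw [← zeta_inv]
          exact Subgroup.inv_mem _ ha } with hK
    have hKtop : K = ⊤ := by
      refine perfect_subgroup (hNA l) K ?_
      intro a b
      show zeta l s.1 ⁅a, b⁆ ∈ NT
      rw [commutatorElement_def, ← zeta_mul_same, ← zeta_mul_same, ← zeta_mul_same,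
        ← zeta_inv, ← zeta_inv]
      exact hcomm s (zeta l s.1 a) (zeta l s.1 b) (zeta_mem_Wr' l s a)
        (zeta_mem_Wr' l s b) (hconcz a) (hconcz b)
    have : h ∈ K := hKtop ▸ Subgroup.mem_top h
    exact this
  -- STEP 4: everything active strictly below l₀ is in NT
  have hlow : ∀ g : Equiv.Perm (S Λ H), g ∈ Wr Λ H → Act g ⊆ {m | m < l₀} → g ∈ NT := by
    intro g hgWr hactg
    have hcl := mem_closure_zetaGens {m | m < l₀} hgWr hactg
    have hle : Subgroup.closure (zetaGens (Λ := Λ) (H := H) {m | m < l₀}) ≤ NT := by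
      rw [Subgroup.closure_le]
      rintro e ⟨l, t, h, hl, rfl⟩
      exact hzlow l hl t h
    exact hle hcl
  -- STEP 5: top zetas are in NT
  have hztop : ∀ (t : S Λ H) (h : H l₀), zeta l₀ t.1 h ∈ NT := by
    intro t h
    haveI := hS l₀
    obtain ⟨k, k₂, hk⟩ := hNA l₀
    obtain ⟨p, hpNT, hpk⟩ := hfull t k
    set ζ₂ := zeta l₀ t.1 k₂ with hζ₂
    have hζ₂Wr : ζ₂ ∈ Wr Λ H := zeta_mem_Wr' l₀ t k₂
    set m0 := p * ζ₂ * p⁻¹ * ζ₂⁻¹ with hm0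
    have hm0NT : m0 ∈ NT := by
      have h1 : ζ₂ * p⁻¹ * ζ₂⁻¹ ∈ NT := hconj p⁻¹ (Subgroup.inv_mem _ hpNT) ζ₂ hζ₂Wr
      have h2 : m0 = p * (ζ₂ * p⁻¹ * ζ₂⁻¹) := by rw [hm0]; group
      rw [h2]
      exact Subgroup.mul_mem _ hpNT h1
    have hccm0 : ∀ x : S Λ H,
        cc m0 l₀ x = if SAg l₀ x.1 t.1 then k * k₂ * k⁻¹ * k₂⁻¹ else 1 := by
      intro x
      have e : cc m0 l₀ x = cc p l₀ (ζ₂ (p⁻¹ (ζ₂⁻¹ x))) * cc ζ₂ l₀ (p⁻¹ (ζ₂⁻¹ x)) *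
          cc p⁻¹ l₀ (ζ₂⁻¹ x) * cc ζ₂⁻¹ l₀ x := by
        rw [hm0, cc_mul, cc_mul, cc_mul]
      have hsy₁ : SAg l₀ (ζ₂⁻¹ x).1 x.1 := by
        rw [hζ₂, zeta_inv]
        exact sag_zeta_self _ _ _ _
      have hsy₂ : SAg l₀ (p⁻¹ (ζ₂⁻¹ x)).1 x.1 :=
        SAg.trans (fun m hm => hsagNT p⁻¹ (Subgroup.inv_mem _ hpNT) (ζ₂⁻¹ x) m hm) hsy₁
      have hsy₃ : SAg l₀ (ζ₂ (p⁻¹ (ζ₂⁻¹ x))).1 x.1 :=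
        SAg.trans (sag_zeta_self _ _ _ _) hsy₂
      have c₄ : cc ζ₂⁻¹ l₀ x = if SAg l₀ x.1 t.1 then k₂⁻¹ else 1 := by
        rw [hζ₂, zeta_inv, cc_zeta_self]
      have c₃ : cc p⁻¹ l₀ (ζ₂⁻¹ x) = (cc p l₀ x)⁻¹ := by
        rw [hccNT_inv p hpNT (ζ₂⁻¹ x), wr_sliceC (hNTWr p hpNT) l₀ (ζ₂⁻¹ x) x hsy₁]
      have c₂ : cc ζ₂ l₀ (p⁻¹ (ζ₂⁻¹ x)) = if SAg l₀ x.1 t.1 then k₂ else 1 := by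
        rw [hζ₂, cc_zeta_self]
        by_cases hx : SAg l₀ x.1 t.1
        · rw [if_pos hx, if_pos (hsy₂.trans hx)]
        · rw [if_neg hx, if_neg (fun hc => hx ((sag_congr t.1 hsy₂).1 hc))]
      have c₁ : cc p l₀ (ζ₂ (p⁻¹ (ζ₂⁻¹ x))) = cc p l₀ x :=
        wr_sliceC (hNTWr p hpNT) l₀ _ x hsy₃
      rw [e, c₁, c₂, c₃, c₄]
      by_cases hx : SAg l₀ x.1 t.1
      · rw [if_pos hx, if_pos hx, if_pos hx]
        have hcpx : cc p l₀ x = k := by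
          rw [wr_sliceC (hNTWr p hpNT) l₀ x t hx]
          exact hpk
        rw [hcpx]
      · rw [if_neg hx, if_neg hx, if_neg hx]
        group
    set ζc := zeta l₀ t.1 (k * k₂ * k⁻¹ * k₂⁻¹) with hζc
    set m' := ζc⁻¹ * m0 with hm'
    have hm'Wr : m' ∈ Wr Λ H :=
      Subgroup.mul_mem _ (Subgroup.inv_mem _ (zeta_mem_Wr' l₀ t _)) (hNTWr m0 hm0NT)
    have hccm' : ∀ x : S Λ H, cc m' l₀ x = 1 := by
      intro x
      have e : cc m' l₀ x = cc ζc⁻¹ l₀ (m0 x) * cc m0 l₀ x := by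
        rw [hm', cc_mul]
      have hsag : SAg l₀ (m0 x).1 x.1 := fun m hm => hsagNT m0 hm0NT x m hm
      have c1 : cc ζc⁻¹ l₀ (m0 x) =
          if SAg l₀ x.1 t.1 then (k * k₂ * k⁻¹ * k₂⁻¹)⁻¹ else 1 := by
        rw [hζc, zeta_inv, cc_zeta_self]
        by_cases hx : SAg l₀ x.1 t.1
        · rw [if_pos hx, if_pos (hsag.trans hx)]
        · rw [if_neg hx, if_neg (fun hc => hx ((sag_congr t.1 hsag).1 hc))]
      rw [e, c1, hccm0 x]
      by_cases hx : SAg l₀ x.1 t.1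
      · rw [if_pos hx, if_pos hx, inv_mul_cancel]
      · rw [if_neg hx, if_neg hx, one_mul]
    have hfixm' : ∀ (x : S Λ H) (m : Λ), l₀ < m → (m' x).1 m = x.1 m := by
      intro x m hm
      have e1 : (m' x) = ζc⁻¹ (m0 x) := by rw [hm']; rfl
      rw [e1, hζc, zeta_inv, zeta_apply_ne _ _ _ _ hm.ne']
      exact hfix' m0 hm0NT x m hm
    have hactm' : Act m' ⊆ {m | m < l₀} := by
      intro m hm
      obtain ⟨x, hx⟩ := hm
      rcases lt_trichotomy m l₀ with hc | hc | hc
      · exact hc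
      · exfalso
        subst hc
        refine hx ?_
        rw [cc_spec, hccm' x, one_mul]
      · exact absurd (hfixm' x m hc) hx
    have hm'NT : m' ∈ NT := hlow m' hm'Wr hactm'
    have hζcNT : ζc ∈ NT := by
      have e : ζc = m0 * m'⁻¹ := by rw [hm']; group
      rw [e]
      exact Subgroup.mul_mem _ hm0NT (Subgroup.inv_mem _ hm'NT)
    set K : Subgroup (H l₀) :=
      { carrier := {a | zeta l₀ t.1 a ∈ NT}
        one_mem' := by
          show zeta l₀ t.1 (1 : H l₀) ∈ NT
          rw [zeta_one]
          exact Subgroup.one_mem _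
        mul_mem' := by
          intro a b ha hb
          show zeta l₀ t.1 (a * b) ∈ NT
          rw [← zeta_mul_same]
          exact Subgroup.mul_mem _ ha hb
        inv_mem' := by
          intro a ha
          show zeta l₀ t.1 a⁻¹ ∈ NT
          rw [← zeta_inv]
          exact Subgroup.inv_mem _ ha } with hKdef
    have hKnormal : K.Normal := by
      constructor
      intro a ha j
      show zeta l₀ t.1 (j * a * j⁻¹) ∈ NT
      have e : zeta l₀ t.1 (j * a * j⁻¹) =
          zeta l₀ t.1 j * zeta l₀ t.1 a * (zeta l₀ t.1 j)⁻¹ := by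
        rw [zeta_inv, zeta_mul_same, zeta_mul_same]
      rw [e]
      exact hconj _ ha _ (zeta_mem_Wr' l₀ t j)
    have hKtop : K = ⊤ := by
      rcases hKnormal.eq_bot_or_eq_top with hbot | htop
      · exfalso
        have hmem : (k * k₂ * k⁻¹ * k₂⁻¹) ∈ K := hζcNT
        rw [hbot, Subgroup.mem_bot] at hmem
        have : ⁅k, k₂⁆ = 1 := by rw [commutatorElement_def]; exact hmem
        rw [commutatorElement_eq_one_iff_commute] at this
        exact hk this
      · exact htop
    have : h ∈ K := hKtop ▸ Subgroup.mem_top h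
    exact this
  -- STEP 6: conclude
  refine le_antisymm ?_ ?_
  · intro n hn
    show ∀ (x : S Λ H) (l : Λ), l ∉ {l : Λ | l ≤ l₀} → ((n : Equiv.Perm (S Λ H)) x).1 l = x.1 l
    intro x l hl
    exact hfix' (↑n) ⟨n, hn, rfl⟩ x l (not_le.1 hl)
  · intro d hd
    have hdWr : (d : Equiv.Perm (S Λ H)) ∈ Wr Λ H := d.2
    have hdfix : ∀ (x : S Λ H) (l : Λ), l ∉ {l : Λ | l ≤ l₀} →
        ((d : Equiv.Perm (S Λ H)) x).1 l = x.1 l := hd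
    have hactd : Act (d : Equiv.Perm (S Λ H)) ⊆ {l | l ≤ l₀} := by
      intro l hl
      by_contra hc
      obtain ⟨x, hx⟩ := hl
      exact hx (hdfix x l hc)
    have hcl := mem_closure_zetaGens {l | l ≤ l₀} hdWr hactd
    have hle : Subgroup.closure (zetaGens (Λ := Λ) (H := H) {l | l ≤ l₀}) ≤ NT := by
      rw [Subgroup.closure_le]
      rintro e ⟨l, t, h, hl, rfl⟩
      rcases lt_or_eq_of_le hl with hlt | heq
      · exact hzlow l hlt t h
      · subst heq
        exact hztop t h
    have hdNT : (d : Equiv.Perm (S Λ H)) ∈ NT := hle hcl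
    obtain ⟨n, hn, hne⟩ := hdNT
    have : n = d := Subtype.coe_injective hne
    exact this ▸ hn

end GW

end

noncomputable section

namespace GW

open Equiv

set_option linter.unusedSectionVars false
set_option maxHeartbeats 1000000

variable {Λ : Type*} [LinearOrder Λ] {H : Λ → Type*} [∀ l, Group (H l)]

/-- The everywhere-trivial configuration. -/
def oneS : S Λ H :=
  ⟨fun _ => 1, by
    have h : supp (fun l => (1 : H l)) = (∅ : Set Λ) := by
      ext l
      simp [supp]
    rw [h]
    exact Set.finite_empty⟩

lemma xi_apply_oneS (l₀ : Λ) (h₀ : H l₀) :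
    ((xi H l₀ h₀) (oneS : S Λ H)).1 l₀ = h₀ := by
  have hcpos : SAg l₀ (oneS : S Λ H).1 (fun _ => 1) := fun m _ => rfl
  rw [xi_eq_zeta, zeta_apply_self, if_pos hcpos]
  show h₀ * 1 = h₀
  rw [mul_one]

lemma D_normal (l₀ : Λ) : (D H {l : Λ | l ≤ l₀}).Normal := by
  constructor
  intro d hd g
  show ∀ (x : S Λ H) (l : Λ), l ∉ {l : Λ | l ≤ l₀} →
    (((g * d * g⁻¹ : ↥(Wr Λ H)) : Equiv.Perm (S Λ H)) x).1 l = x.1 l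
  intro x l hl
  have hdfix : ∀ (y : S Λ H) (m : Λ), m ∉ {l : Λ | l ≤ l₀} →
      ((d : Equiv.Perm (S Λ H)) y).1 m = y.1 m := hd
  have e1 : (((g * d * g⁻¹ : ↥(Wr Λ H)) : Equiv.Perm (S Λ H)) x) =
      (g : Equiv.Perm (S Λ H)) ((d : Equiv.Perm (S Λ H))
        (((g : Equiv.Perm (S Λ H)))⁻¹ x)) := rfl
  rw [e1]
  have e2 : ((g : Equiv.Perm (S Λ H)) ((d : Equiv.Perm (S Λ H))
      (((g : Equiv.Perm (S Λ H)))⁻¹ x))).1 l =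
      ((g : Equiv.Perm (S Λ H)) (((g : Equiv.Perm (S Λ H)))⁻¹ x)).1 l := by
    refine wr_coordEq g.2 l _ _ ?_
    intro m hm
    refine hdfix _ m ?_
    intro hc
    exact hl (Set.mem_setOf_eq ▸ le_trans hm hc)
  rw [e2, show (g : Equiv.Perm (S Λ H)) ((g : Equiv.Perm (S Λ H))⁻¹ x) = x from
    Equiv.apply_symm_apply _ x]

lemma xi_mem_D (l₀ : Λ) (h₀ : H l₀) :
    (⟨xi H l₀ h₀, xi_mem_Wr l₀ h₀⟩ : ↥(Wr Λ H)) ∈ D H {l : Λ | l ≤ l₀} := by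
  show ∀ (x : S Λ H) (l : Λ), l ∉ {l : Λ | l ≤ l₀} → ((xi H l₀ h₀) x).1 l = x.1 l
  intro x l hl
  have hne : l ≠ l₀ := fun hc => hl (hc ▸ le_rfl)
  exact xiFun_apply_ne H l₀ h₀ x.1 hne

lemma D_ne_bot (hS : ∀ l : Λ, IsSimpleGroup (H l)) (l₀ : Λ) :
    D H {l : Λ | l ≤ l₀} ≠ ⊥ := by
  haveI := hS l₀
  obtain ⟨h₀, hh₀⟩ := exists_ne (1 : H l₀)
  intro hbot
  have hmem := xi_mem_D l₀ h₀
  rw [hbot, Subgroup.mem_bot] at hmem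
  have : ((xi H l₀ h₀) (oneS : S Λ H)).1 l₀ = (oneS : S Λ H).1 l₀ := by
    rw [show xi H l₀ h₀ = ((⟨xi H l₀ h₀, xi_mem_Wr l₀ h₀⟩ : ↥(Wr Λ H)) :
      Equiv.Perm (S Λ H)) from rfl, hmem]
    rfl
  rw [xi_apply_oneS] at this
  exact hh₀ this

lemma D_le_iff (hS : ∀ l : Λ, IsSimpleGroup (H l)) {w w' : Λ} :
    D H {l : Λ | l ≤ w} ≤ D H {l : Λ | l ≤ w'} ↔ w ≤ w' := by
  constructor
  · intro hle
    by_contra hc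
    have hw : w' < w := not_le.1 hc
    haveI := hS w
    obtain ⟨h₀, hh₀⟩ := exists_ne (1 : H w)
    have hmem := hle (xi_mem_D w h₀)
    have hfix : ∀ (x : S Λ H) (l : Λ), l ∉ {l : Λ | l ≤ w'} →
        ((xi H w h₀) x).1 l = x.1 l := hmem
    have := hfix oneS w (by simpa using not_le.2 hw)
    rw [xi_apply_oneS] at this
    exact hh₀ this
  · intro hle d hd
    have hdfix : ∀ (x : S Λ H) (l : Λ), l ∉ {l : Λ | l ≤ w} →
        ((d : Equiv.Perm (S Λ H)) x).1 l = x.1 l := hd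
    show ∀ (x : S Λ H) (l : Λ), l ∉ {l : Λ | l ≤ w'} →
      ((d : Equiv.Perm (S Λ H)) x).1 l = x.1 l
    intro x l hl
    refine hdfix x l ?_
    intro hc
    exact hl (Set.mem_setOf_eq ▸ le_trans hc hle)

theorem orderIso_general [WellFoundedGT Λ] (hS : ∀ l : Λ, IsSimpleGroup (H l))
    (hNA : ∀ l : Λ, ∃ a b : H l, a * b ≠ b * a) :
    Nonempty ({N : Subgroup ↥(Wr Λ H) // N.Normal ∧ N ≠ ⊥} ≃o Λ) := by
  set f : Λ → {N : Subgroup ↥(Wr Λ H) // N.Normal ∧ N ≠ ⊥} :=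
    fun w => ⟨D H {l : Λ | l ≤ w}, D_normal w, D_ne_bot hS w⟩ with hf
  have hrel : ∀ a b : Λ, f a ≤ f b ↔ a ≤ b := by
    intro a b
    rw [hf]
    exact (Subtype.mk_le_mk).trans (D_le_iff hS)
  have hinj : Function.Injective f := by
    intro a b hab
    exact le_antisymm ((hrel a b).1 hab.le) ((hrel b a).1 hab.ge)
  have hsurj : Function.Surjective f := by
    rintro ⟨N, hNn, hNb⟩
    -- the set of moved coordinates
    set M : Set Λ := {l | ∃ n ∈ N, ∃ x : S Λ H,
      ((n : Equiv.Perm (S Λ H)) x).1 l ≠ x.1 l} with hM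
    have hMne : M.Nonempty := by
      obtain ⟨n, hnN, hn1⟩ : ∃ n ∈ N, n ≠ 1 := by
        by_contra hcon
        push_neg at hcon
        exact hNb ((Subgroup.eq_bot_iff_forall N).2 hcon)
      have hnp : (n : Equiv.Perm (S Λ H)) ≠ 1 := by
        intro hc
        exact hn1 (Subtype.ext hc)
      obtain ⟨x, hx⟩ : ∃ x : S Λ H, (n : Equiv.Perm (S Λ H)) x ≠ x := by
        by_contra hcon
        push_neg at hcon
        exact hnp (Equiv.ext fun x => hcon x)
      obtain ⟨l, hl⟩ : ∃ l : Λ, ((n : Equiv.Perm (S Λ H)) x).1 l ≠ x.1 l := by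
        by_contra hcon
        push_neg at hcon
        exact hx (Subtype.ext (funext hcon))
      exact ⟨l, n, hnN, x, hl⟩
    obtain ⟨l₀, hl₀M, hl₀max⟩ : ∃ m ∈ M, ∀ x ∈ M, x ≤ m := by
      obtain ⟨m, hms, hmin⟩ :=
        (IsWellFounded.wf (r := ((· > ·) : Λ → Λ → Prop))).has_min M hMne
      exact ⟨m, hms, fun x hx => not_lt.1 (fun hlt => hmin x hx hlt)⟩
    have hfixN : ∀ p ∈ N.map (Wr Λ H).subtype, ∀ (x : S Λ H) (m : Λ), l₀ < m →
        (p x).1 m = x.1 m := by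
      rintro p ⟨q, hq, rfl⟩ x m hm
      by_contra hc
      have : m ∈ M := ⟨q, hq, x, hc⟩
      exact absurd (hl₀max m this) (not_le.2 hm)
    have hactN : ∃ p ∈ N.map (Wr Λ H).subtype, ∃ x : S Λ H,
        (p x).1 l₀ ≠ x.1 l₀ := by
      obtain ⟨n, hnN, x, hx⟩ := hl₀M
      exact ⟨(n : Equiv.Perm (S Λ H)), ⟨n, hnN, rfl⟩, x, hx⟩
    refine ⟨l₀, ?_⟩
    rw [hf]
    exact Subtype.ext (classify hS hNA N hNn l₀ hfixN hactN).symm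
  set e : Λ ≃ {N : Subgroup ↥(Wr Λ H) // N.Normal ∧ N ≠ ⊥} :=
    Equiv.ofBijective f ⟨hinj, hsurj⟩ with he
  refine ⟨OrderIso.symm ⟨e, ?_⟩⟩
  intro a b
  exact hrel a b

end GW

end

/-- for a well-order `W` and `G_W = Wr_{λ∈W^op} A₅`, the set of nontrivial
normal subgroups of `G_W` (including `G_W` itself), ordered by inclusion, is
order-isomorphic to `W^op`. -/
theorem nontrivial_normal_subgroups_orderIso (W : Type*) [LinearOrder W] [WellFoundedLT W] :
    Nonempty
      ({N : Subgroup ↥(GW.Wr Wᵒᵈ (fun _ : Wᵒᵈ => ↥(alternatingGroup (Fin 5)))) //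
          N.Normal ∧ N ≠ ⊥} ≃o Wᵒᵈ) := by
  have hNA : ∀ l : Wᵒᵈ, ∃ a b : ↥(alternatingGroup (Fin 5)), a * b ≠ b * a := by
    intro l
    refine ⟨⟨Equiv.swap 0 1 * Equiv.swap 1 2, ?_⟩,
      ⟨Equiv.swap 2 3 * Equiv.swap 3 4, ?_⟩, ?_⟩
    · rw [Equiv.Perm.mem_alternatingGroup]; decide
    · rw [Equiv.Perm.mem_alternatingGroup]; decide
    · intro hc
      have h2 := Subtype.ext_iff.1 hc
      exact absurd h2 (by decide)
  exact GW.orderIso_general (fun _ => alternatingGroup.isSimpleGroup_five) hNA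
end

section
/- Let W be a countable well-order and let G_W = Wr_{λ∈W^op} H_λ where every H_λ is the alternating group A₅. Then G_W is Hopfian: every surjective group homomorphism f : G_W → G_W is injective. -/
open scoped Classical

theorem Equiv.Perm.apply_inv_self {α : Type*} (f : Equiv.Perm α) (x : α) : f (f⁻¹ x) = x :=
  f.apply_symm_apply x

theorem Equiv.Perm.inv_apply_self {α : Type*} (f : Equiv.Perm α) (x : α) : f⁻¹ (f x) = x :=
  f.symm_apply_apply x

noncomputable section
namespace GWP

set_option linter.unusedSectionVars false

open GW Equiv

/-! ### Facts about `A₅` -/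

abbrev A5 : Type := ↥(alternatingGroup (Fin 5))

lemma A5_noncomm : ∃ a b : A5, a * b ≠ b * a := by
  refine ⟨⟨finRotate 5, Equiv.Perm.mem_alternatingGroup.mpr (by decide)⟩,
    ⟨Equiv.swap 0 1 * Equiv.swap 1 2, Equiv.Perm.mem_alternatingGroup.mpr (by decide)⟩, ?_⟩
  intro h
  have := congrArg Subtype.val h
  simp only [Subgroup.coe_mul] at this
  exact absurd this (by decide)

lemma A5_exists_noncomm (a : A5) (ha : a ≠ 1) : ∃ v : A5, v * a * v⁻¹ * a⁻¹ ≠ 1 := by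
  by_contra hc
  push_neg at hc
  have hmem : a ∈ Subgroup.center A5 := by
    rw [Subgroup.mem_center_iff]
    intro v
    have h2 : v * a * v⁻¹ = a := by
      have h1 := hc v
      have := congrArg (· * a) h1
      simpa [mul_assoc] using this
    calc v * a = (v * a * v⁻¹) * v := by group
    _ = a * v := by rw [h2]
  have hnorm : (Subgroup.center A5).Normal := inferInstance
  rcases hnorm.eq_bot_or_eq_top with hb | ht
  · rw [hb, Subgroup.mem_bot] at hmem; exact ha hmem
  · obtain ⟨x, y, hxy⟩ := A5_noncomm
    have hx : x ∈ Subgroup.center A5 := ht ▸ Subgroup.mem_top x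
    exact hxy ((Subgroup.mem_center_iff.mp hx) y).symm

/-! ### Basic setup -/

variable {Λ : Type*} [LinearOrder Λ]

abbrev Hc (Λ : Type*) : Λ → Type := fun _ => A5

abbrev SS (Λ : Type*) : Type _ := GW.S Λ (Hc Λ)

abbrev GG (Λ : Type*) [LinearOrder Λ] : Subgroup (Equiv.Perm (SS Λ)) := GW.Wr Λ (Hc Λ)

/-- The increment of `g` at coordinate `m`, evaluated at `x`. -/
def bb (g : Equiv.Perm (SS Λ)) (m : Λ) (x : SS Λ) : A5 := (g x).1 m * (x.1 m)⁻¹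

/-- Agreement strictly above `m`. -/
def Agr (m : Λ) (x y : SS Λ) : Prop := ∀ u, m < u → x.1 u = y.1 u

/-- `g` moves coordinate `u` (at some point). -/
def Moves (g : Equiv.Perm (SS Λ)) (u : Λ) : Prop := ∃ x, (g x).1 u ≠ x.1 u

/-- The increment at any coordinate depends only on the strictly-above part. -/
def Detm (g : Equiv.Perm (SS Λ)) : Prop :=
  ∀ m (x y : SS Λ), Agr m x y → bb g m x = bb g m y

lemma Agr.refl {m : Λ} (x : SS Λ) : Agr m x x := fun _ _ => rfl

lemma Agr.symm {m : Λ} {x y : SS Λ} (h : Agr m x y) : Agr m y x := fun u hu => (h u hu).symm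

lemma Agr.trans {m : Λ} {x y z : SS Λ} (h : Agr m x y) (h' : Agr m y z) : Agr m x z :=
  fun u hu => (h u hu).trans (h' u hu)

lemma apply_coord (g : Equiv.Perm (SS Λ)) (m : Λ) (x : SS Λ) :
    (g x).1 m = bb g m x * x.1 m := by
  simp [bb, inv_mul_cancel_right]

lemma bb_one (m : Λ) (x : SS Λ) : bb (1 : Equiv.Perm (SS Λ)) m x = 1 := by
  simp [bb]

lemma bb_mul (g h : Equiv.Perm (SS Λ)) (m : Λ) (x : SS Λ) :
    bb (g * h) m x = bb g m (h x) * bb h m x := by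
  simp only [bb, Equiv.Perm.mul_apply]
  group

lemma bb_inv (g : Equiv.Perm (SS Λ)) (m : Λ) (x : SS Λ) :
    bb g⁻¹ m x = (bb g m (g⁻¹ x))⁻¹ := by
  have h := bb_mul g g⁻¹ m x
  simp only [mul_inv_cancel, bb_one] at h
  rw [eq_comm, inv_eq_iff_mul_eq_one, ← h]

lemma bb_ne_one_iff (g : Equiv.Perm (SS Λ)) (m : Λ) (x : SS Λ) :
    bb g m x ≠ 1 ↔ (g x).1 m ≠ x.1 m := by
  simp [bb, mul_inv_eq_one]

lemma not_moves_apply {g : Equiv.Perm (SS Λ)} {u : Λ} (h : ¬ Moves g u) (x : SS Λ) :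
    (g x).1 u = x.1 u := by
  by_contra hc
  exact h ⟨x, hc⟩

lemma moves_mul {g h : Equiv.Perm (SS Λ)} {u : Λ} (hm : Moves (g * h) u) :
    Moves g u ∨ Moves h u := by
  by_contra hc
  push_neg at hc
  obtain ⟨x, hx⟩ := hm
  apply hx
  rw [Equiv.Perm.mul_apply, not_moves_apply hc.1, not_moves_apply hc.2]

lemma moves_inv {g : Equiv.Perm (SS Λ)} {u : Λ} : Moves g⁻¹ u ↔ Moves g u := by
  constructor
  · rintro ⟨x, hx⟩
    refine ⟨g⁻¹ x, ?_⟩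
    intro hc
    apply hx
    rw [← hc, Equiv.Perm.apply_inv_self]
  · rintro ⟨x, hx⟩
    refine ⟨g x, ?_⟩
    intro hc
    apply hx
    rw [← hc, Equiv.Perm.inv_apply_self]

lemma moves_one {u : Λ} : ¬ Moves (1 : Equiv.Perm (SS Λ)) u := by
  rintro ⟨x, hx⟩; exact hx rfl

/-! ### `xi` lemmas -/

lemma xi_coe_apply (l : Λ) (h : A5) (x : SS Λ) :
    ((GW.xi (Hc Λ) l h) x).1 = GW.xiFun (Hc Λ) l h x.1 := rfl

lemma xi_coord_self (l : Λ) (h : A5) (x : SS Λ) :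
    ((GW.xi (Hc Λ) l h) x).1 l
      = if ∀ n, l < n → x.1 n = 1 then h * x.1 l else x.1 l := by
  rw [xi_coe_apply]
  simp [GW.xiFun]

lemma xi_coord_ne (l : Λ) (h : A5) (x : SS Λ) {u : Λ} (hu : u ≠ l) :
    ((GW.xi (Hc Λ) l h) x).1 u = x.1 u := by
  rw [xi_coe_apply]
  exact GW.xiFun_apply_ne _ l h x.1 hu

lemma xi_eq_of_not_cond (l : Λ) (h : A5) (x : SS Λ) (hc : ¬ ∀ n, l < n → x.1 n = 1) :
    (GW.xi (Hc Λ) l h) x = x := by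
  apply Subtype.ext
  rw [xi_coe_apply]
  funext u
  rcases eq_or_ne u l with rfl | hne
  · simp [GW.xiFun, if_neg hc]
  · exact GW.xiFun_apply_ne (Hc Λ) l h x.1 hne

lemma xi_mem (l : Λ) (h : A5) : GW.xi (Hc Λ) l h ∈ GG Λ :=
  Subgroup.subset_closure ⟨l, h, rfl⟩

lemma xi_inv (l : Λ) (h : A5) : (GW.xi (Hc Λ) l h)⁻¹ = GW.xi (Hc Λ) l h⁻¹ := by
  apply Equiv.ext
  intro x
  rfl

lemma xiFun_self (l : Λ) (h : A5) (x : (u : Λ) → Hc Λ u) :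
    GW.xiFun (Hc Λ) l h x l = if ∀ n, l < n → x n = 1 then h * x l else x l := by
  simp [GW.xiFun]

lemma xi_mul (l : Λ) (h h' : A5) :
    GW.xi (Hc Λ) l h * GW.xi (Hc Λ) l h' = GW.xi (Hc Λ) l (h * h') := by
  apply Equiv.ext
  intro x
  apply Subtype.ext
  show GW.xiFun (Hc Λ) l h (GW.xiFun (Hc Λ) l h' x.1) = GW.xiFun (Hc Λ) l (h * h') x.1
  funext u
  rcases eq_or_ne u l with rfl | hne
  · rw [xiFun_self u h, xiFun_self u (h * h'), xiFun_self u h']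
    by_cases hc : ∀ n, u < n → x.1 n = 1
    · rw [if_pos ((GW.xiFun_cond (Hc Λ) u h' x.1).2 hc), if_pos hc, if_pos hc, mul_assoc]
    · rw [if_neg (fun hcy => hc ((GW.xiFun_cond (Hc Λ) u h' x.1).1 hcy)), if_neg hc, if_neg hc]
  · rw [GW.xiFun_apply_ne (Hc Λ) l h _ hne, GW.xiFun_apply_ne (Hc Λ) l h' x.1 hne,
      GW.xiFun_apply_ne (Hc Λ) l (h * h') x.1 hne]

lemma xi_one (l : Λ) : GW.xi (Hc Λ) l (1 : A5) = 1 := by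
  apply Equiv.ext
  intro x
  apply Subtype.ext
  show GW.xiFun (Hc Λ) l 1 x.1 = x.1
  funext u
  rcases eq_or_ne u l with rfl | hne
  · simp [GW.xiFun]
  · exact GW.xiFun_apply_ne (Hc Λ) l 1 x.1 hne

/-! ### Determinism: increments depend only on the part strictly above -/

lemma detm_xi (l : Λ) (h : A5) : Detm (GW.xi (Hc Λ) l h) := by
  intro m x y hxy
  unfold bb
  rcases eq_or_ne m l with rfl | hne
  · rw [xi_coord_self, xi_coord_self]
    have hiff : (∀ n, m < n → x.1 n = 1) ↔ (∀ n, m < n → y.1 n = 1) := by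
      constructor
      · intro hc n hn; rw [← hxy n hn]; exact hc n hn
      · intro hc n hn; rw [hxy n hn]; exact hc n hn
    by_cases hc : ∀ n, m < n → x.1 n = 1
    · rw [if_pos hc, if_pos (hiff.1 hc)]; group
    · rw [if_neg hc, if_neg (fun hcy => hc (hiff.2 hcy))]; group
  · rw [xi_coord_ne l h x hne, xi_coord_ne l h y hne]; group

lemma detm_one : Detm (1 : Equiv.Perm (SS Λ)) := by
  intro m x y _; rw [bb_one, bb_one]

lemma Detm.agr {g : Equiv.Perm (SS Λ)} (hg : Detm g) {m : Λ} {x y : SS Λ}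
    (h : Agr m x y) : Agr m (g x) (g y) := by
  intro u hu
  have h1 : Agr u x y := fun v hv => h v (hu.trans hv)
  have h2 := hg u x y h1
  rw [apply_coord, apply_coord, h2, h u hu]

lemma Detm.mul {g h : Equiv.Perm (SS Λ)} (hg : Detm g) (hh : Detm h) : Detm (g * h) := by
  intro m x y hxy
  rw [bb_mul, bb_mul, hh m x y hxy, hg m (h x) (h y) (hh.agr hxy)]

lemma detm_of_mem {g : Equiv.Perm (SS Λ)} (hg : g ∈ GG Λ) : Detm g := by
  have : Detm g ∧ Detm g⁻¹ := by
    refine Subgroup.closure_induction ?_ ?_ ?_ ?_ hg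
    · rintro x ⟨l, h, rfl⟩
      exact ⟨detm_xi l h, by rw [xi_inv]; exact detm_xi l h⁻¹⟩
    · exact ⟨detm_one, by rw [inv_one]; exact detm_one⟩
    · rintro x y _ _ ⟨hx, hxi⟩ ⟨hy, hyi⟩
      exact ⟨hx.mul hy, by rw [mul_inv_rev]; exact hyi.mul hxi⟩
    · rintro x _ ⟨hx, hxi⟩
      exact ⟨hxi, by rw [inv_inv]; exact hx⟩
  exact this.1

lemma agr_apply {g : Equiv.Perm (SS Λ)} (hg : g ∈ GG Λ) {m : Λ} {x y : SS Λ}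
    (h : Agr m x y) : Agr m (g x) (g y) := (detm_of_mem hg).agr h

lemma bb_agr {g : Equiv.Perm (SS Λ)} (hg : g ∈ GG Λ) {m : Λ} {x y : SS Λ}
    (h : Agr m x y) : bb g m x = bb g m y := detm_of_mem hg m x y h

/-- Pointwise agreement at `u` and above is preserved. -/
lemma agrGe_apply {g : Equiv.Perm (SS Λ)} (hg : g ∈ GG Λ) {m : Λ} {x y : SS Λ}
    (h : ∀ u, m ≤ u → x.1 u = y.1 u) : ∀ u, m ≤ u → (g x).1 u = (g y).1 u := by
  intro u hu
  have h1 : Agr u x y := fun v hv => h v (hu.trans hv.le)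
  have h2 := detm_of_mem hg u x y h1
  rw [apply_coord, apply_coord, h2, h u hu]

/-! ### Finiteness of the set of moved coordinates -/

lemma moves_finite {g : Equiv.Perm (SS Λ)} (hg : g ∈ GG Λ) : {u : Λ | Moves g u}.Finite := by
  refine Subgroup.closure_induction ?_ ?_ ?_ ?_ hg
  · rintro x ⟨l, h, rfl⟩
    refine Set.Finite.subset (Set.finite_singleton l) ?_
    rintro u ⟨x, hx⟩
    by_contra hne
    exact hx (xi_coord_ne l h x (by simpa using hne))
  · refine Set.Finite.subset (Set.finite_empty) ?_
    rintro u hu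
    exact absurd hu moves_one
  · intro x y _ _ hx hy
    refine Set.Finite.subset (hx.union hy) ?_
    intro u hu
    exact moves_mul hu
  · intro x _ hx
    refine Set.Finite.subset hx ?_
    intro u hu
    exact moves_inv.1 hu

/-! ### Finite class support of increments -/

def FSupp (g : Equiv.Perm (SS Λ)) (m : Λ) : Prop :=
  ∃ T : Finset (SS Λ), ∀ x, bb g m x ≠ 1 → ∃ t ∈ T, Agr m x t

lemma fsupp_of_mem {g : Equiv.Perm (SS Λ)} (hg : g ∈ GG Λ) (m : Λ) : FSupp g m := by
  revert m
  refine Subgroup.closure_induction (p := fun g _ => ∀ m : Λ, FSupp g m) ?_ ?_ ?_ ?_ hg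
  · rintro x ⟨l, h, rfl⟩ m
    rcases eq_or_ne m l with rfl | hne
    · refine ⟨{⟨fun _ => 1, by simp [GW.supp]⟩}, fun x hx => ?_⟩
      refine ⟨_, Finset.mem_singleton_self _, ?_⟩
      by_contra hc
      have hcond : ¬ ∀ n, m < n → x.1 n = 1 := by
        intro hall
        exact hc (fun u hu => hall u hu)
      apply hx
      have heq := xi_eq_of_not_cond m h x hcond
      show ((GW.xi (Hc Λ) m h) x).1 m * (x.1 m)⁻¹ = 1
      rw [heq]
      simp
    · refine ⟨∅, fun x hx => ?_⟩
      rw [bb_ne_one_iff] at hx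
      exact absurd (xi_coord_ne l h x hne) hx
  · intro m
    exact ⟨∅, fun x hx => absurd (bb_one m x) hx⟩
  · rintro g h hgG hhG hg hh m
    obtain ⟨Tg, hTg⟩ := hg m
    obtain ⟨Th, hTh⟩ := hh m
    have hhG' : h ∈ GG Λ := hhG
    refine ⟨Th ∪ Tg.image (fun t => h⁻¹ t), fun x hx => ?_⟩
    rw [bb_mul] at hx
    by_cases hbh : bb h m x = 1
    · rw [hbh, mul_one] at hx
      obtain ⟨t, ht, hagr⟩ := hTg (h x) hx
      refine ⟨h⁻¹ t, Finset.mem_union_right _ (Finset.mem_image_of_mem _ ht), ?_⟩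
      have := agr_apply (inv_mem hhG') hagr
      rwa [Equiv.Perm.inv_apply_self] at this
    · obtain ⟨t, ht, hagr⟩ := hTh x hbh
      exact ⟨t, Finset.mem_union_left _ ht, hagr⟩
  · rintro g hgG hg m
    obtain ⟨T, hT⟩ := hg m
    refine ⟨T.image (fun t => g t), fun x hx => ?_⟩
    rw [bb_inv] at hx
    obtain ⟨t, ht, hagr⟩ := hT (g⁻¹ x) (by simpa using hx)
    refine ⟨g t, Finset.mem_image_of_mem _ ht, ?_⟩
    have := agr_apply (hgG : g ∈ GG Λ) hagr
    rwa [Equiv.Perm.apply_inv_self] at this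

/-! ### Clean permutations (moving a single coordinate) -/

def Clean (m : Λ) (g : Equiv.Perm (SS Λ)) : Prop := ∀ (x : SS Λ) u, u ≠ m → (g x).1 u = x.1 u

lemma clean_one (m : Λ) : Clean m (1 : Equiv.Perm (SS Λ)) := fun _ _ _ => rfl

lemma Clean.mul {m : Λ} {g h : Equiv.Perm (SS Λ)} (hg : Clean m g) (hh : Clean m h) :
    Clean m (g * h) := by
  intro x u hu
  rw [Equiv.Perm.mul_apply, hg (h x) u hu, hh x u hu]

lemma Clean.inv {m : Λ} {g : Equiv.Perm (SS Λ)} (hg : Clean m g) : Clean m g⁻¹ := by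
  intro x u hu
  have := hg (g⁻¹ x) u hu
  rw [Equiv.Perm.apply_inv_self] at this
  exact this.symm

lemma Clean.agr {m : Λ} {g : Equiv.Perm (SS Λ)} (hg : Clean m g) (x : SS Λ) :
    Agr m (g x) x := fun u hu => hg x u (ne_of_gt hu)

lemma Clean.moves_eq {m : Λ} {g : Equiv.Perm (SS Λ)} (hg : Clean m g) {u : Λ}
    (h : Moves g u) : u = m := by
  by_contra hc
  obtain ⟨x, hx⟩ := h
  exact hx (hg x u hc)

lemma clean_of_not_moves {m : Λ} {g : Equiv.Perm (SS Λ)} (h : ∀ u, Moves g u → u = m) :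
    Clean m g := by
  intro x u hu
  by_contra hc
  exact hu (h u ⟨x, hc⟩)

lemma clean_ext {m : Λ} {g g' : Equiv.Perm (SS Λ)} (hg : Clean m g) (hg' : Clean m g')
    (hb : ∀ x, bb g m x = bb g' m x) : g = g' := by
  apply Equiv.ext
  intro x
  apply Subtype.ext
  funext u
  rcases eq_or_ne u m with rfl | hne
  · rw [apply_coord, apply_coord, hb x]
  · rw [hg x u hne, hg' x u hne]

lemma clean_bb_inv {m : Λ} {g : Equiv.Perm (SS Λ)} (hgm : g ∈ GG Λ) (hg : Clean m g)
    (x : SS Λ) : bb g⁻¹ m x = (bb g m x)⁻¹ := by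
  rw [bb_inv]
  congr 1
  exact bb_agr hgm (hg.inv.agr x)

/-- Clean permutations don't change the class above any level. -/
lemma Clean.agr_any {m : Λ} {g : Equiv.Perm (SS Λ)} (hg : Clean m g) {m' : Λ}
    (hm : ¬ m' < m) (x : SS Λ) : Agr m' (g x) x := by
  intro u hu
  exact hg x u (fun he => hm (he ▸ hu))

/-! ### Transitivity: reaching every configuration from the trivial one -/

def oneS : SS Λ := ⟨fun _ => 1, by
  have : GW.supp (fun _ : Λ => (1 : A5)) = ∅ := by
    ext u; simp [GW.supp]
  rw [this]; exact Set.finite_empty⟩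

lemma oneS_coord (u : Λ) : (oneS : SS Λ).1 u = 1 := rfl

lemma reach_aux : ∀ (n : ℕ) (x : SS Λ), x.2.toFinset.card ≤ n →
    ∃ g, g ∈ GG Λ ∧ (∀ u, Moves g u → x.1 u ≠ 1) ∧ g oneS = x := by
  intro n
  induction n with
  | zero =>
    intro x hx
    have hempty : x.2.toFinset = ∅ := Finset.card_eq_zero.1 (Nat.le_zero.1 hx)
    have hall : ∀ u, x.1 u = 1 := by
      intro u
      by_contra hc
      have : u ∈ x.2.toFinset := x.2.mem_toFinset.2 hc
      rw [hempty] at this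
      exact absurd this (Finset.notMem_empty u)
    have hxe : x = oneS := Subtype.ext (funext hall)
    exact ⟨1, one_mem _, fun u hu => absurd hu moves_one, by rw [hxe]; rfl⟩
  | succ n ih =>
    intro x hx
    by_cases hle : x.2.toFinset.card ≤ n
    · exact ih x hle
    have hne : x.2.toFinset.Nonempty := by
      rw [← Finset.card_pos]; omega
    set u0 := x.2.toFinset.max' hne with hu0
    have hu0mem : u0 ∈ x.2.toFinset := x.2.toFinset.max'_mem hne
    have hu0ne : x.1 u0 ≠ 1 := x.2.mem_toFinset.1 hu0mem
    have hu0max : ∀ v ∈ x.2.toFinset, v ≤ u0 := fun v hv => x.2.toFinset.le_max' v hv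
    set x' : SS Λ := ⟨Function.update x.1 u0 1, by
      apply x.2.subset
      intro u hu
      simp only [GW.supp, Set.mem_setOf_eq] at hu ⊢
      rcases eq_or_ne u u0 with rfl | hne'
      · rw [Function.update_self] at hu; exact absurd rfl hu
      · rwa [Function.update_of_ne hne'] at hu⟩ with hx'
    have hx'coord : ∀ u, u ≠ u0 → x'.1 u = x.1 u := by
      intro u hu; exact Function.update_of_ne hu _ _
    have hx'u0 : x'.1 u0 = 1 := Function.update_self _ _ _
    have hsub : x'.2.toFinset ⊆ x.2.toFinset.erase u0 := by
      intro u hu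
      have h1 : x'.1 u ≠ 1 := x'.2.mem_toFinset.1 hu
      have h2 : u ≠ u0 := by
        intro he; rw [he, hx'u0] at h1; exact h1 rfl
      rw [Finset.mem_erase]
      exact ⟨h2, x.2.mem_toFinset.2 (by rwa [hx'coord u h2] at h1)⟩
    have hcard : x'.2.toFinset.card ≤ n := by
      have := Finset.card_le_card hsub
      rw [Finset.card_erase_of_mem hu0mem] at this
      omega
    obtain ⟨g', hg'mem, hg'mv, hg'app⟩ := ih x' hcard
    refine ⟨GW.xi (Hc Λ) u0 (x.1 u0) * g', mul_mem (xi_mem u0 (x.1 u0)) hg'mem, ?_, ?_⟩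
    · intro u hu
      rcases moves_mul hu with h1 | h2
      · have : u = u0 := by
          by_contra hc
          obtain ⟨z, hz⟩ := h1
          exact hz (xi_coord_ne u0 (x.1 u0) z hc)
        rwa [this]
      · have h3 := hg'mv u h2
        have h4 : u ≠ u0 := by
          intro he; rw [he, hx'u0] at h3; exact h3 rfl
        rwa [hx'coord u h4] at h3
    · rw [Equiv.Perm.mul_apply, hg'app]
      apply Subtype.ext
      funext v
      by_cases hveq : v = u0
      · rw [hveq, xi_coord_self]
        have hcond : ∀ nn, u0 < nn → x'.1 nn = 1 := by
          intro nn hnn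
          have hne'' : nn ≠ u0 := ne_of_gt hnn
          rw [hx'coord nn hne'']
          by_contra hc
          exact absurd (hu0max nn (x.2.mem_toFinset.2 hc)) (not_le.2 hnn)
        rw [if_pos hcond, hx'u0, mul_one]
      · rw [xi_coord_ne u0 (x.1 u0) x' hveq, hx'coord v hveq]

lemma reach (x : SS Λ) :
    ∃ g, g ∈ GG Λ ∧ (∀ u, Moves g u → x.1 u ≠ 1) ∧ g oneS = x :=
  reach_aux x.2.toFinset.card x le_rfl

/-! ### The canonical single-class clean elements `sig` -/

def yconf (m : Λ) (x0 : SS Λ) : SS Λ :=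
  ⟨fun u => if m < u then x0.1 u else 1, by
    apply x0.2.subset
    intro u hu
    simp only [GW.supp, Set.mem_setOf_eq] at hu ⊢
    by_cases h : m < u
    · rwa [if_pos h] at hu
    · rw [if_neg h] at hu; exact absurd rfl hu⟩

lemma yconf_agr (m : Λ) (x0 : SS Λ) : Agr m (yconf m x0) x0 := by
  intro u hu
  show (if m < u then x0.1 u else 1) = x0.1 u
  rw [if_pos hu]

lemma yconf_not_lt (m : Λ) (x0 : SS Λ) {u : Λ} (hu : ¬ m < u) : (yconf m x0).1 u = 1 := by
  show (if m < u then x0.1 u else 1) = 1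
  rw [if_neg hu]

def gre (m : Λ) (x0 : SS Λ) : Equiv.Perm (SS Λ) := (reach (yconf m x0)).choose

lemma gre_mem (m : Λ) (x0 : SS Λ) : gre m x0 ∈ GG Λ := (reach (yconf m x0)).choose_spec.1

lemma gre_moves (m : Λ) (x0 : SS Λ) {u : Λ} (hu : Moves (gre m x0) u) : m < u := by
  have h := (reach (yconf m x0)).choose_spec.2.1 u hu
  by_contra hc
  exact h (yconf_not_lt m x0 hc)

lemma gre_apply (m : Λ) (x0 : SS Λ) : gre m x0 oneS = yconf m x0 :=
  (reach (yconf m x0)).choose_spec.2.2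

def dd (m : Λ) (x0 : SS Λ) : A5 := bb (gre m x0) m oneS

def sig (m : Λ) (x0 : SS Λ) (a : A5) : Equiv.Perm (SS Λ) :=
  gre m x0 * GW.xi (Hc Λ) m ((dd m x0)⁻¹ * a * dd m x0) * (gre m x0)⁻¹

lemma xi_clean (m : Λ) (c : A5) : Clean m (GW.xi (Hc Λ) m c) := by
  intro x u hu
  exact xi_coord_ne m c x hu

lemma bb_xi (m : Λ) (c : A5) (x : SS Λ) :
    bb (GW.xi (Hc Λ) m c) m x = if (∀ n, m < n → x.1 n = 1) then c else 1 := by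
  unfold bb
  rw [xi_coord_self]
  split
  · group
  · group

/-- Conjugating a clean element by an element only moving things strictly above `m`
stays clean. -/
lemma conj_clean {g s : Equiv.Perm (SS Λ)} {m : Λ} (hgmem : g ∈ GG Λ)
    (hgmv : ∀ u, Moves g u → m < u) (hs : Clean m s) : Clean m (g * s * g⁻¹) := by
  intro x u hu
  rw [Equiv.Perm.mul_apply, Equiv.Perm.mul_apply]
  rcases lt_or_gt_of_ne hu with hlt | hgt
  · have h1 : ¬ Moves g u := fun h => absurd (hgmv u h) (not_lt.2 hlt.le)
    have h2 : ¬ Moves g⁻¹ u := fun h => h1 (moves_inv.1 h)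
    rw [not_moves_apply h1, hs (g⁻¹ x) u hu, not_moves_apply h2]
  · have hag : ∀ v, u ≤ v → (s (g⁻¹ x)).1 v = (g⁻¹ x).1 v := by
      intro v hv
      exact hs (g⁻¹ x) v (fun he => absurd (he ▸ hv) (not_le.2 hgt))
    have := agrGe_apply hgmem hag u le_rfl
    rwa [Equiv.Perm.apply_inv_self] at this

lemma conj_bb {g s : Equiv.Perm (SS Λ)} {m : Λ} (hg : g ∈ GG Λ) (hs : Clean m s) (x : SS Λ) :
    bb (g * s * g⁻¹) m x
      = bb g m (g⁻¹ x) * bb s m (g⁻¹ x) * (bb g m (g⁻¹ x))⁻¹ := by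
  rw [bb_mul, bb_mul, bb_inv]
  congr 2
  exact bb_agr hg (hs.agr (g⁻¹ x))

lemma sig_mem (m : Λ) (x0 : SS Λ) (a : A5) : sig m x0 a ∈ GG Λ :=
  mul_mem (mul_mem (gre_mem m x0) (xi_mem m _)) (inv_mem (gre_mem m x0))

lemma sig_clean (m : Λ) (x0 : SS Λ) (a : A5) : Clean m (sig m x0 a) :=
  conj_clean (gre_mem m x0) (fun u hu => gre_moves m x0 hu) (xi_clean m _)

lemma cond_iff_agr (m : Λ) (x0 : SS Λ) (x : SS Λ) :
    (∀ n, m < n → ((gre m x0)⁻¹ x).1 n = 1) ↔ Agr m x x0 := by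
  constructor
  · intro h
    have h1 : Agr m ((gre m x0)⁻¹ x) oneS := fun u hu => h u hu
    have h2 := agr_apply (gre_mem m x0) h1
    rw [Equiv.Perm.apply_inv_self, gre_apply] at h2
    exact h2.trans (yconf_agr m x0)
  · intro h
    have h1 : Agr m x (yconf m x0) := fun u hu => (h u hu).trans ((yconf_agr m x0) u hu).symm
    have h2 := agr_apply (inv_mem (gre_mem m x0)) h1
    rw [← gre_apply m x0, Equiv.Perm.inv_apply_self] at h2
    exact fun u hu => h2 u hu

lemma sig_bb (m : Λ) (x0 : SS Λ) (a : A5) (x : SS Λ) :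
    bb (sig m x0 a) m x = if Agr m x x0 then a else 1 := by
  unfold sig
  rw [conj_bb (gre_mem m x0) (xi_clean m _), bb_xi]
  by_cases hc : Agr m x x0
  · rw [if_pos hc, if_pos ((cond_iff_agr m x0 x).2 hc)]
    have hD : bb (gre m x0) m ((gre m x0)⁻¹ x) = dd m x0 := by
      apply bb_agr (gre_mem m x0)
      exact fun u hu => ((cond_iff_agr m x0 x).2 hc) u hu
    rw [hD]
    group
  · rw [if_neg hc, if_neg (fun h => hc ((cond_iff_agr m x0 x).1 h))]
    group

lemma sig_mul (m : Λ) (x0 : SS Λ) (a b : A5) :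
    sig m x0 a * sig m x0 b = sig m x0 (a * b) := by
  unfold sig
  have : GW.xi (Hc Λ) m ((dd m x0)⁻¹ * a * dd m x0) * GW.xi (Hc Λ) m ((dd m x0)⁻¹ * b * dd m x0)
      = GW.xi (Hc Λ) m ((dd m x0)⁻¹ * (a * b) * dd m x0) := by
    rw [xi_mul]
    congr 1
    group
  calc gre m x0 * GW.xi (Hc Λ) m ((dd m x0)⁻¹ * a * dd m x0) * (gre m x0)⁻¹ *
        (gre m x0 * GW.xi (Hc Λ) m ((dd m x0)⁻¹ * b * dd m x0) * (gre m x0)⁻¹)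
      = gre m x0 * (GW.xi (Hc Λ) m ((dd m x0)⁻¹ * a * dd m x0) *
          GW.xi (Hc Λ) m ((dd m x0)⁻¹ * b * dd m x0)) * (gre m x0)⁻¹ := by group
  _ = _ := by rw [this]

lemma sig_one (m : Λ) (x0 : SS Λ) : sig m x0 (1 : A5) = 1 := by
  unfold sig
  have h1 : (dd m x0)⁻¹ * (1 : A5) * dd m x0 = 1 := by group
  rw [h1, xi_one]
  group

lemma sig_moves (m : Λ) (x0 : SS Λ) {a : A5} (ha : a ≠ 1) : Moves (sig m x0 a) m := by
  refine ⟨x0, ?_⟩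
  rw [← bb_ne_one_iff, sig_bb, if_pos (Agr.refl x0)]
  exact ha

/-! ### Factorization of clean elements into `sig`s -/

lemma sig_congr {m : Λ} {x0 x0' : SS Λ} (h : Agr m x0 x0') (a : A5) :
    sig m x0 a = sig m x0' a := by
  apply clean_ext (sig_clean m x0 a) (sig_clean m x0' a)
  intro x
  rw [sig_bb, sig_bb]
  by_cases hc : Agr m x x0
  · rw [if_pos hc, if_pos (hc.trans h)]
  · rw [if_neg hc, if_neg (fun hc' => hc (hc'.trans h.symm))]

lemma conj_sig {h : Equiv.Perm (SS Λ)} {m : Λ} (hmem : h ∈ GG Λ)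
    (hmv : ∀ u, Moves h u → m < u) (x0 : SS Λ) (a : A5) :
    h * sig m x0 a * h⁻¹ = sig m (h x0) (bb h m x0 * a * (bb h m x0)⁻¹) := by
  have hcl : Clean m (h * sig m x0 a * h⁻¹) :=
    conj_clean hmem hmv (sig_clean m x0 a)
  have hiff : ∀ x : SS Λ, Agr m (h⁻¹ x) x0 ↔ Agr m x (h x0) := by
    intro x
    constructor
    · intro hagr
      have := agr_apply hmem hagr
      rwa [Equiv.Perm.apply_inv_self] at this
    · intro hagr
      have := agr_apply (inv_mem hmem) hagr
      rwa [Equiv.Perm.inv_apply_self] at this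
  apply clean_ext hcl (sig_clean m (h x0) _)
  intro x
  rw [conj_bb hmem (sig_clean m x0 a), sig_bb, sig_bb]
  by_cases hc : Agr m x (h x0)
  · rw [if_pos ((hiff x).2 hc), if_pos hc, bb_agr hmem ((hiff x).2 hc)]
  · rw [if_neg (fun hc' => hc ((hiff x).1 hc')), if_neg hc]
    group

lemma factor (m : Λ) : ∀ (n : ℕ) (T : Finset (SS Λ)), T.card ≤ n →
    ∀ (β : SS Λ → A5), (∀ x y, Agr m x y → β x = β y) →
    (∀ x, β x ≠ 1 → ∃ t ∈ T, Agr m x t) →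
    ∃ e, e ∈ Subgroup.closure {g : Equiv.Perm (SS Λ) | ∃ x0 a, g = sig m x0 a} ∧
      ∀ x, bb e m x = β x := by
  intro n
  induction n with
  | zero =>
    intro T hT β hβcl hβs
    refine ⟨1, one_mem _, fun x => ?_⟩
    rw [bb_one]
    by_contra hc
    obtain ⟨t, ht, _⟩ := hβs x (fun h => hc h.symm)
    rw [Finset.card_eq_zero.1 (Nat.le_zero.1 hT)] at ht
    exact absurd ht (Finset.notMem_empty t)
  | succ n ih =>
    intro T hT β hβcl hβs
    by_cases hall : ∀ x, β x = 1
    · refine ⟨1, one_mem _, fun x => ?_⟩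
      rw [bb_one, hall x]
    push_neg at hall
    obtain ⟨x0, hx0⟩ := hall
    obtain ⟨t0, ht0, hagr0⟩ := hβs x0 hx0
    set β' : SS Λ → A5 := fun x => if Agr m x x0 then 1 else β x with hβ'
    have hβ'cl : ∀ x y, Agr m x y → β' x = β' y := by
      intro x y hxy
      simp only [hβ']
      by_cases hc : Agr m x x0
      · rw [if_pos hc, if_pos (hxy.symm.trans hc)]
      · rw [if_neg hc, if_neg (fun hc' => hc (hxy.trans hc')), hβcl x y hxy]
    have hβ's : ∀ x, β' x ≠ 1 → ∃ t ∈ T.erase t0, Agr m x t := by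
      intro x hx
      simp only [hβ'] at hx
      by_cases hc : Agr m x x0
      · rw [if_pos hc] at hx; exact absurd rfl hx
      · rw [if_neg hc] at hx
        obtain ⟨t, ht, hagr⟩ := hβs x hx
        refine ⟨t, Finset.mem_erase.2 ⟨?_, ht⟩, hagr⟩
        intro he
        exact hc (hagr.trans (he ▸ hagr0.symm : Agr m t x0))
    have hcard : (T.erase t0).card ≤ n := by
      rw [Finset.card_erase_of_mem ht0]
      omega
    obtain ⟨e', he'mem, he'bb⟩ := ih (T.erase t0) hcard β' hβ'cl hβ's
    refine ⟨e' * sig m x0 (β x0),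
      mul_mem he'mem (Subgroup.subset_closure ⟨x0, β x0, rfl⟩), fun x => ?_⟩
    rw [bb_mul, he'bb, sig_bb]
    have hagrsig : Agr m (sig m x0 (β x0) x) x := (sig_clean m x0 (β x0)).agr x
    rw [hβ'cl _ _ hagrsig]
    simp only [hβ']
    by_cases hc : Agr m x x0
    · rw [if_pos hc, if_pos hc, one_mul, hβcl x x0 hc]
    · rw [if_neg hc, if_neg hc, mul_one]

lemma sigs_clean_mem {m : Λ}
    {e : Equiv.Perm (SS Λ)}
    (he : e ∈ Subgroup.closure {g : Equiv.Perm (SS Λ) | ∃ x0 a, g = sig m x0 a}) :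
    Clean m e ∧ e ∈ GG Λ := by
  refine Subgroup.closure_induction ?_ ?_ ?_ ?_ he
  · rintro x ⟨x0, a, rfl⟩
    exact ⟨sig_clean m x0 a, sig_mem m x0 a⟩
  · exact ⟨clean_one m, one_mem _⟩
  · rintro x y _ _ ⟨hx, hxG⟩ ⟨hy, hyG⟩
    exact ⟨hx.mul hy, mul_mem hxG hyG⟩
  · rintro x _ ⟨hx, hxG⟩
    exact ⟨hx.inv, inv_mem hxG⟩

/-! ### The clean case of the key lemma -/

/-- The map `a ↦ sig m x0 a` as a monoid hom. -/
def sigHom (m : Λ) (x0 : SS Λ) : A5 →* Equiv.Perm (SS Λ) :=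
  MonoidHom.mk' (fun a => sig m x0 a) (fun a b => (sig_mul m x0 a b).symm)

lemma sigHom_apply (m : Λ) (x0 : SS Λ) (a : A5) : sigHom m x0 a = sig m x0 a := rfl

variable {N : Subgroup (Equiv.Perm (SS Λ))}

/-- If a normal-in-`GG` subgroup contains a clean element moving coordinate `m`, it
contains every clean element at `m`. -/
lemma cleancase (hconj : ∀ g ∈ GG Λ, ∀ k ∈ N, g * k * g⁻¹ ∈ N)
    {m : Λ} {n : Equiv.Perm (SS Λ)} (hnN : n ∈ N) (hnG : n ∈ GG Λ)
    (hncl : Clean m n) (hnmv : Moves n m) :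
    ∀ d ∈ GG Λ, Clean m d → d ∈ N := by
  classical
  obtain ⟨x1, hx1⟩ := hnmv
  have ha1 : bb n m x1 ≠ 1 := (bb_ne_one_iff n m x1).2 hx1
  obtain ⟨v, hv⟩ := A5_exists_noncomm (bb n m x1) ha1
  set a1 := bb n m x1 with ha1def
  set w := v * a1 * v⁻¹ * a1⁻¹ with hw
  set sv := sig m x1 v with hsv
  have hsvG : sv ∈ GG Λ := sig_mem m x1 v
  have hsvcl : Clean m sv := sig_clean m x1 v
  set n'' := sv * n * sv⁻¹ * n⁻¹ with hn''
  have hn''N : n'' ∈ N := mul_mem (hconj sv hsvG n hnN) (inv_mem hnN)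
  have hn''cl : Clean m n'' := ((hsvcl.mul hncl).mul hsvcl.inv).mul hncl.inv
  -- compute the increment of `n''`
  have hbbn'' : ∀ x, bb n'' m x = if Agr m x x1 then w else 1 := by
    intro x
    have e1 : bb n'' m x
        = bb sv m (n (sv⁻¹ (n⁻¹ x))) * bb n m (sv⁻¹ (n⁻¹ x)) * bb sv⁻¹ m (n⁻¹ x)
            * bb n⁻¹ m x := by
      rw [hn'', bb_mul, bb_mul, bb_mul]
    -- move all the arguments to `x` using agreement
    have hA1 : Agr m (n⁻¹ x) x := hncl.inv.agr x
    have hA2 : Agr m (sv⁻¹ (n⁻¹ x)) x := (hsvcl.inv.agr (n⁻¹ x)).trans hA1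
    have hA3 : Agr m (n (sv⁻¹ (n⁻¹ x))) x := (hncl.agr _).trans hA2
    rw [bb_agr hsvG hA3, bb_agr hnG hA2, clean_bb_inv hsvG hsvcl, clean_bb_inv hnG hncl,
      bb_agr hsvG hA1] at e1
    rw [e1, hsv, sig_bb]
    by_cases hagr : Agr m x x1
    · rw [if_pos hagr, if_pos hagr, bb_agr hnG hagr, ← ha1def, hw]
    · rw [if_neg hagr, if_neg hagr]
      group
  have hn''sig : n'' = sig m x1 w := by
    apply clean_ext hn''cl (sig_clean m x1 w)
    intro x
    rw [hbbn'' x, sig_bb]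
  -- all values at the class of `x1`
  have hall1 : ∀ a : A5, sig m x1 a ∈ N := by
    intro a
    set Sy : Subgroup A5 := N.comap (sigHom m x1) with hSy
    have hSynorm : Sy.Normal := by
      constructor
      intro b hb v'
      have : sigHom m x1 (v' * b * v'⁻¹)
          = sigHom m x1 v' * sigHom m x1 b * (sigHom m x1 v')⁻¹ := by
        rw [map_mul, map_mul, map_inv]
      show sigHom m x1 (v' * b * v'⁻¹) ∈ N
      rw [this]
      exact hconj _ (sig_mem m x1 v') _ hb
    have hwSy : w ∈ Sy := by
      show sigHom m x1 w ∈ N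
      rw [sigHom_apply, ← hn''sig]
      exact hn''N
    rcases hSynorm.eq_bot_or_eq_top with hb | ht
    · rw [hb, Subgroup.mem_bot] at hwSy
      exact absurd hwSy hv
    · have : a ∈ Sy := ht ▸ Subgroup.mem_top a
      exact this
  -- all values at all classes
  have hallc : ∀ (xc : SS Λ) (a : A5), sig m xc a ∈ N := by
    intro xc a
    set h := gre m xc * (gre m x1)⁻¹ with hh
    have hhG : h ∈ GG Λ := mul_mem (gre_mem m xc) (inv_mem (gre_mem m x1))
    have hhmv : ∀ u, Moves h u → m < u := by
      intro u hu
      rcases moves_mul hu with h1 | h2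
      · exact gre_moves m xc h1
      · exact gre_moves m x1 (moves_inv.1 h2)
    have hagr : Agr m (h x1) xc := by
      have h1 : Agr m x1 (yconf m x1) := (yconf_agr m x1).symm
      have h2 : Agr m ((gre m x1)⁻¹ x1) oneS := by
        have := agr_apply (inv_mem (gre_mem m x1)) h1
        rwa [← gre_apply m x1, Equiv.Perm.inv_apply_self] at this
      have h3 : Agr m (h x1) (gre m xc oneS) := by
        have := agr_apply (gre_mem m xc) h2
        simpa only [hh, Equiv.Perm.mul_apply] using this
      rw [gre_apply m xc] at h3
      exact h3.trans (yconf_agr m xc)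
    set D := bb h m x1 with hD
    have := conj_sig hhG hhmv x1 (D⁻¹ * a * D)
    rw [sig_congr hagr] at this
    have hval : D * (D⁻¹ * a * D) * D⁻¹ = a := by group
    rw [hval] at this
    rw [← this]
    exact hconj h hhG _ (hall1 _)
  -- conclude for arbitrary clean `d`
  intro d hdG hdcl
  obtain ⟨T, hT⟩ := fsupp_of_mem hdG m
  obtain ⟨e, heS, hebb⟩ := factor m T.card T le_rfl (bb d m)
    (fun x y hxy => bb_agr hdG hxy) hT
  have hecl := (sigs_clean_mem heS).1
  have heN : e ∈ N := by
    refine Subgroup.closure_induction ?_ ?_ ?_ ?_ heS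
    · rintro g ⟨x0, a, rfl⟩
      exact hallc x0 a
    · exact one_mem N
    · intro g g' _ _ hg hg'
      exact mul_mem hg hg'
    · intro g _ hg
      exact inv_mem hg
  have : d = e := clean_ext hdcl hecl (fun x => (hebb x).symm)
  rw [this]
  exact heN

/-! ### The key commutator construction -/

lemma clean_bb_ne {m' m : Λ} {g : Equiv.Perm (SS Λ)} (hg : Clean m' g) (hne : m ≠ m')
    (x : SS Λ) : bb g m x = 1 := by
  show (g x).1 m * (x.1 m)⁻¹ = 1
  rw [hg x m hne]
  exact mul_inv_cancel _

/-- Commutating `n` with a `sig` at a level `m` strictly below a coordinate where `n`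
acts produces an element trivial strictly above `m` which moves `m`, and whose other
moved coordinates are moved coordinates of `n` below `m`. -/
lemma keyconj {m : Λ} {n : Equiv.Perm (SS Λ)} (hnG : n ∈ GG Λ) {x0 : SS Λ}
    (hnAgr : ¬ Agr m (n x0) x0) {v : A5} (hv : v ≠ 1) :
    (n * sig m x0 v * n⁻¹ * (sig m x0 v)⁻¹) ∈ GG Λ ∧
    (∀ (x : SS Λ) u, m < u → ((n * sig m x0 v * n⁻¹ * (sig m x0 v)⁻¹) x).1 u = x.1 u) ∧
    Moves (n * sig m x0 v * n⁻¹ * (sig m x0 v)⁻¹) m ∧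
      (∀ u, Moves (n * sig m x0 v * n⁻¹ * (sig m x0 v)⁻¹) u →
        u = m ∨ (Moves n u ∧ u < m)) := by
  set s := sig m x0 v with hsdef
  set n' := n * s * n⁻¹ * s⁻¹ with hn'def
  have hsG : s ∈ GG Λ := sig_mem m x0 v
  have hscl : Clean m s := sig_clean m x0 v
  have hn'G : n' ∈ GG Λ :=
    mul_mem (mul_mem (mul_mem hnG hsG) (inv_mem hnG)) (inv_mem hsG)
  have htriv : ∀ (x : SS Λ) u, m < u → (n' x).1 u = x.1 u := by
    intro x u hu
    have h1 : ∀ w, u ≤ w → (s⁻¹ x).1 w = x.1 w := by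
      intro w hw
      exact hscl.inv x w (ne_of_gt (hu.trans_le hw))
    have h2 : ∀ w, u ≤ w → (n⁻¹ (s⁻¹ x)).1 w = (n⁻¹ x).1 w :=
      agrGe_apply (inv_mem hnG) h1
    have h3 : ∀ w, u ≤ w → (s (n⁻¹ (s⁻¹ x))).1 w = (n⁻¹ x).1 w := by
      intro w hw
      rw [hscl (n⁻¹ (s⁻¹ x)) w (ne_of_gt (hu.trans_le hw))]
      exact h2 w hw
    have h4 := agrGe_apply hnG h3 u le_rfl
    have : n' x = n (s (n⁻¹ (s⁻¹ x))) := by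
      show (n * s * n⁻¹ * s⁻¹) x = _
      simp [Equiv.Perm.mul_apply]
    rw [this, h4, Equiv.Perm.apply_inv_self]
  have hmoves : Moves n' m := by
    have e1 : bb n' m (n x0)
        = bb n m (s (n⁻¹ (s⁻¹ (n x0)))) * bb s m (n⁻¹ (s⁻¹ (n x0)))
          * bb n⁻¹ m (s⁻¹ (n x0)) * bb s⁻¹ m (n x0) := by
      show bb (n * s * n⁻¹ * s⁻¹) m (n x0) = _
      rw [bb_mul, bb_mul, bb_mul]
    have hA1 : Agr m (s⁻¹ (n x0)) (n x0) := hscl.inv.agr (n x0)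
    have hA2 : Agr m (n⁻¹ (s⁻¹ (n x0))) x0 := by
      have := agr_apply (inv_mem hnG) hA1
      rwa [Equiv.Perm.inv_apply_self] at this
    have hA3 : Agr m (s (n⁻¹ (s⁻¹ (n x0)))) x0 := (hscl.agr _).trans hA2
    have ht4 : bb s⁻¹ m (n x0) = 1 := by
      rw [clean_bb_inv hsG hscl, sig_bb, if_neg hnAgr, inv_one]
    have ht3 : bb n⁻¹ m (s⁻¹ (n x0)) = (bb n m x0)⁻¹ := by
      rw [bb_agr (inv_mem hnG) hA1, bb_inv]
      congr 1
      rw [Equiv.Perm.inv_apply_self]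
    have ht2 : bb s m (n⁻¹ (s⁻¹ (n x0))) = v := by
      rw [sig_bb, if_pos hA2]
    have ht1 : bb n m (s (n⁻¹ (s⁻¹ (n x0)))) = bb n m x0 := bb_agr hnG hA3
    rw [ht1, ht2, ht3, ht4, mul_one] at e1
    refine ⟨n x0, ?_⟩
    rw [← bb_ne_one_iff, e1]
    intro hc
    apply hv
    have := congrArg (fun z => (bb n m x0)⁻¹ * z * bb n m x0) hc
    simpa [mul_assoc] using this
  refine ⟨hn'G, htriv, hmoves, ?_⟩
  intro u hu
  have hnotgt : ¬ m < u := by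
    intro hgt
    obtain ⟨x, hx⟩ := hu
    exact hx (htriv x u hgt)
  rcases eq_or_ne u m with rfl | hne
  · exact Or.inl rfl
  · right
    have hlt : u < m := lt_of_le_of_ne (not_lt.1 hnotgt) hne
    refine ⟨?_, hlt⟩
    rcases moves_mul hu with h1 | h2
    · rcases moves_mul h1 with h3 | h4
      · rcases moves_mul h3 with h5 | h6
        · exact h5
        · exact absurd (hscl.moves_eq h6) hne
      · exact moves_inv.1 h4
    · exact absurd (hscl.inv.moves_eq h2) hne

/-! ### The key lemma: normal subgroups absorb all clean elements at moved levels -/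

lemma lemC (hconj : ∀ g ∈ GG Λ, ∀ k ∈ N, g * k * g⁻¹ ∈ N) :
    ∀ (j : ℕ) (m : Λ) (n : Equiv.Perm (SS Λ)), n ∈ N → n ∈ GG Λ →
    (∀ (x : SS Λ) u, m < u → (n x).1 u = x.1 u) → Moves n m →
    ∀ (J : Finset Λ), (∀ u, Moves n u → u = m ∨ u ∈ J) → (∀ u ∈ J, u < m) →
    J.card ≤ j → ∀ d ∈ GG Λ, Clean m d → d ∈ N := by
  intro j
  induction j with
  | zero =>
    intro m n hnN hnG htriv hmv J hJ hJlt hcard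
    have hcl : ∀ u, Moves n u → u = m := by
      intro u hu
      rcases hJ u hu with h | h
      · exact h
      · rw [Finset.card_eq_zero.1 (Nat.le_zero.1 hcard)] at h
        exact absurd h (Finset.notMem_empty u)
    exact cleancase hconj hnN hnG (clean_of_not_moves hcl) hmv
  | succ j ih =>
    intro m n hnN hnG htriv hmv J hJ hJlt hcard
    by_cases hcl : ∀ u, Moves n u → u = m
    · exact cleancase hconj hnN hnG (clean_of_not_moves hcl) hmv
    push_neg at hcl
    obtain ⟨m', hm'mv, hm'ne⟩ := hcl
    have hm'J : m' ∈ J := (hJ m' hm'mv).resolve_left hm'ne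
    have hm'lt : m' < m := hJlt m' hm'J
    obtain ⟨x0, hx0⟩ := hmv
    have hnAgr : ¬ Agr m' (n x0) x0 := by
      intro hagr
      exact hx0 (hagr m hm'lt)
    obtain ⟨v, hv⟩ := exists_ne (1 : A5)
    obtain ⟨hn'G, hn'triv, hn'mv, hn'moves⟩ := keyconj hnG hnAgr hv
    set s := sig m' x0 v with hs
    set n' := n * s * n⁻¹ * s⁻¹ with hn'
    have hn'N : n' ∈ N := by
      have : n' = n * (s * n⁻¹ * s⁻¹) := by rw [hn']; group
      rw [this]
      exact mul_mem hnN (hconj s (sig_mem m' x0 v) n⁻¹ (inv_mem hnN))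
    -- first application of the induction hypothesis, at level m'
    have hD' : ∀ d ∈ GG Λ, Clean m' d → d ∈ N := by
      refine ih m' n' hn'N hn'G hn'triv hn'mv ((J.erase m').filter (· < m')) ?_ ?_ ?_
      · intro u hu
        rcases hn'moves u hu with h | ⟨hmvu, hlt⟩
        · exact Or.inl h
        · right
          rw [Finset.mem_filter, Finset.mem_erase]
          refine ⟨⟨ne_of_lt hlt, ?_⟩, hlt⟩
          rcases hJ u hmvu with h | h
          · exact absurd (h ▸ hlt) (not_lt.2 hm'lt.le)
          · exact h
      · intro u hu
        rw [Finset.mem_filter] at hu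
        exact hu.2
      · calc ((J.erase m').filter (· < m')).card ≤ (J.erase m').card :=
              Finset.card_filter_le _ _
          _ ≤ j := by rw [Finset.card_erase_of_mem hm'J]; omega
    -- construct the correction e1 at level m'
    obtain ⟨T, hT⟩ := fsupp_of_mem hnG m'
    obtain ⟨e1, he1S, he1bb⟩ := factor m' T.card T le_rfl (fun x => (bb n m' x)⁻¹)
      (fun x y hxy => by
        show (bb n m' x)⁻¹ = (bb n m' y)⁻¹
        rw [bb_agr hnG hxy])
      (fun x hx => hT x (fun h => hx (by show (bb n m' x)⁻¹ = 1; rw [h, inv_one])))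
    obtain ⟨he1cl, he1G⟩ := sigs_clean_mem he1S
    have he1N : e1 ∈ N := hD' e1 he1G he1cl
    set n2 := n * e1 with hn2
    have hn2N : n2 ∈ N := mul_mem hnN he1N
    have hn2G : n2 ∈ GG Λ := mul_mem hnG he1G
    have he1agr : ∀ x : SS Λ, Agr m' (e1 x) x := he1cl.agr
    have he1agrm : ∀ x : SS Λ, Agr m (e1 x) x := fun x =>
      he1cl.agr_any (not_lt.2 hm'lt.le) x
    have hn2triv : ∀ (x : SS Λ) u, m < u → (n2 x).1 u = x.1 u := by
      intro x u hu
      rw [hn2, Equiv.Perm.mul_apply, htriv (e1 x) u hu]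
      exact he1cl x u (ne_of_gt (hm'lt.trans hu))
    have hbbn2 : ∀ x, bb n2 m x = bb n m x := by
      intro x
      rw [hn2, bb_mul, clean_bb_ne he1cl (ne_of_gt hm'lt) x, mul_one]
      exact bb_agr hnG (he1agrm x)
    have hn2mv : Moves n2 m := by
      refine ⟨x0, ?_⟩
      rw [← bb_ne_one_iff, hbbn2, bb_ne_one_iff]
      exact hx0
    have hn2m' : ∀ x : SS Λ, (n2 x).1 m' = x.1 m' := by
      intro x
      rw [hn2, Equiv.Perm.mul_apply, apply_coord n m' (e1 x), bb_agr hnG (he1agr x),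
        apply_coord e1 m' x, he1bb x]
      group
    -- second application of the induction hypothesis, at level m
    refine ih m n2 hn2N hn2G hn2triv hn2mv (J.erase m') ?_ ?_ ?_
    · intro u hu
      have hune : u ≠ m' := by
        intro he
        obtain ⟨x, hx⟩ := hu
        exact hx (he ▸ hn2m' x)
      rcases moves_mul (hn2 ▸ hu) with h1 | h2
      · rcases hJ u h1 with h | h
        · exact Or.inl h
        · exact Or.inr (Finset.mem_erase.2 ⟨hune, h⟩)
      · exact absurd (he1cl.moves_eq h2) hune
    · intro u hu
      exact hJlt u (Finset.mem_of_mem_erase hu)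
    · rw [Finset.card_erase_of_mem hm'J]; omega

/-! ### Classification of normal subgroups -/

lemma classify_aux (hconj : ∀ g ∈ GG Λ, ∀ k ∈ N, g * k * g⁻¹ ∈ N)
    (hNG : N ≤ GG Λ) {l : Λ}
    (hl1 : ∃ n ∈ N, Moves n l) (hl2 : ∀ n ∈ N, ∀ u, Moves n u → u ≤ l) :
    ∀ g ∈ GG Λ, (∀ u, Moves g u → u ≤ l) → g ∈ N := by
  obtain ⟨n0, hn0N, hn0mv⟩ := hl1
  have hn0G : n0 ∈ GG Λ := hNG hn0N
  -- all clean elements at all levels `≤ l` belong to `N`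
  have hD : ∀ m ≤ l, ∀ d ∈ GG Λ, Clean m d → d ∈ N := by
    intro m hm
    rcases eq_or_lt_of_le hm with rfl | hlt
    · have htriv : ∀ (x : SS Λ) u, m < u → (n0 x).1 u = x.1 u := by
        intro x u hu
        by_contra hc
        exact absurd (hl2 n0 hn0N u ⟨x, hc⟩) (not_le.2 hu)
      exact lemC hconj ((moves_finite hn0G).toFinset.filter (· < m)).card m n0 hn0N hn0G
        htriv hn0mv ((moves_finite hn0G).toFinset.filter (· < m))
        (fun u hu => by
          rcases eq_or_ne u m with rfl | hne
          · exact Or.inl rfl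
          · right
            rw [Finset.mem_filter]
            exact ⟨(moves_finite hn0G).mem_toFinset.2 hu,
              lt_of_le_of_ne (hl2 n0 hn0N u hu) hne⟩)
        (fun u hu => (Finset.mem_filter.1 hu).2) le_rfl
    · obtain ⟨x0, hx0⟩ := hn0mv
      have hnAgr : ¬ Agr m (n0 x0) x0 := fun hagr => hx0 (hagr l hlt)
      obtain ⟨v, hv⟩ := exists_ne (1 : A5)
      obtain ⟨hn'G, hn'triv, hn'mv, hn'moves⟩ := keyconj hn0G hnAgr hv
      set s := sig m x0 v with hsdef
      set n' := n0 * s * n0⁻¹ * s⁻¹ with hn'def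
      have hn'N : n' ∈ N := by
        have : n' = n0 * (s * n0⁻¹ * s⁻¹) := by rw [hn'def]; group
        rw [this]
        exact mul_mem hn0N (hconj s (sig_mem m x0 v) n0⁻¹ (inv_mem hn0N))
      exact lemC hconj ((moves_finite hn'G).toFinset.filter (· < m)).card m n' hn'N hn'G
        hn'triv hn'mv ((moves_finite hn'G).toFinset.filter (· < m))
        (fun u hu => by
          rcases hn'moves u hu with h | ⟨_, hltu⟩
          · exact Or.inl h
          · right
            rw [Finset.mem_filter]
            exact ⟨(moves_finite hn'G).mem_toFinset.2 hu, hltu⟩)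
        (fun u hu => (Finset.mem_filter.1 hu).2) le_rfl
  -- peel an arbitrary bounded element into clean layers
  suffices hpeel : ∀ (k : ℕ) (g : Equiv.Perm (SS Λ)) (hg : g ∈ GG Λ),
      (∀ u, Moves g u → u ≤ l) → (moves_finite hg).toFinset.card ≤ k → g ∈ N by
    intro g hg hbound
    exact hpeel (moves_finite hg).toFinset.card g hg hbound le_rfl
  intro k
  induction k with
  | zero =>
    intro g hg _ hcard
    have hempty : ∀ u, ¬ Moves g u := by
      intro u hu
      have := (moves_finite hg).mem_toFinset.2 hu
      rw [Finset.card_eq_zero.1 (Nat.le_zero.1 hcard)] at this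
      exact absurd this (Finset.notMem_empty u)
    have : g = 1 := by
      apply Equiv.ext
      intro x
      apply Subtype.ext
      funext u
      exact not_moves_apply (hempty u) x
    rw [this]
    exact one_mem N
  | succ k ih =>
    intro g hg hbound hcard
    by_cases hne : (moves_finite hg).toFinset.Nonempty
    swap
    · have hempty : ∀ u, ¬ Moves g u := by
        intro u hu
        exact hne ⟨u, (moves_finite hg).mem_toFinset.2 hu⟩
      have : g = 1 := by
        apply Equiv.ext
        intro x
        apply Subtype.ext
        funext u
        exact not_moves_apply (hempty u) x
      rw [this]
      exact one_mem N
    set m := (moves_finite hg).toFinset.max' hne with hmdef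
    have hmmv : Moves g m :=
      (moves_finite hg).mem_toFinset.1 ((moves_finite hg).toFinset.max'_mem hne)
    have hml : m ≤ l := hbound m hmmv
    have htrivm : ∀ (x : SS Λ) u, m < u → (g x).1 u = x.1 u := by
      intro x u hu
      by_contra hc
      have := (moves_finite hg).toFinset.le_max' u ((moves_finite hg).mem_toFinset.2 ⟨x, hc⟩)
      exact absurd (this.trans_lt hu) (lt_irrefl u)
    obtain ⟨T, hT⟩ := fsupp_of_mem hg m
    obtain ⟨e, heS, hebb⟩ := factor m T.card T le_rfl (bb g m)
      (fun x y hxy => bb_agr hg hxy) hT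
    obtain ⟨hecl, heG⟩ := sigs_clean_mem heS
    have heN : e ∈ N := hD m hml e heG hecl
    set g' := e⁻¹ * g with hg'def
    have hg'G : g' ∈ GG Λ := mul_mem (inv_mem heG) hg
    have hg'm : ∀ x : SS Λ, (g' x).1 m = x.1 m := by
      intro x
      rw [hg'def, Equiv.Perm.mul_apply, apply_coord e⁻¹ m (g x), clean_bb_inv heG hecl,
        hebb (g x), bb_agr hg (fun u hu => htrivm x u hu), apply_coord g m x]
      group
    have hg'moves : ∀ u, Moves g' u → Moves g u ∧ u ≠ m := by
      intro u hu
      have hune : u ≠ m := by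
        intro he
        obtain ⟨x, hx⟩ := hu
        exact hx (he ▸ hg'm x)
      refine ⟨?_, hune⟩
      rcases moves_mul (hg'def ▸ hu) with h1 | h2
      · exact absurd (hecl.inv.moves_eq h1) hune
      · exact h2
    have hsub : (moves_finite hg'G).toFinset ⊆ (moves_finite hg).toFinset.erase m := by
      intro u hu
      have h1 := (moves_finite hg'G).mem_toFinset.1 hu
      obtain ⟨h2, h3⟩ := hg'moves u h1
      exact Finset.mem_erase.2 ⟨h3, (moves_finite hg).mem_toFinset.2 h2⟩
    have hg'N : g' ∈ N := by
      refine ih g' hg'G (fun u hu => hbound u (hg'moves u hu).1) ?_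
      calc (moves_finite hg'G).toFinset.card ≤ ((moves_finite hg).toFinset.erase m).card :=
            Finset.card_le_card hsub
        _ ≤ k := by
            rw [Finset.card_erase_of_mem ((moves_finite hg).toFinset.max'_mem hne)]
            omega
    have : g = e * g' := by rw [hg'def]; group
    rw [this]
    exact mul_mem heN hg'N

/-! ### The normal subgroups `F_l` and the endgame -/

def FtrivP (l : Λ) : Subgroup (Equiv.Perm (SS Λ)) where
  carrier := {g | g ∈ GG Λ ∧ ∀ u, Moves g u → u ≤ l}
  one_mem' := ⟨one_mem _, fun u hu => absurd hu moves_one⟩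
  mul_mem' := by
    rintro a b ⟨ha, hab⟩ ⟨hb, hbb⟩
    exact ⟨mul_mem ha hb, fun u hu => (moves_mul hu).elim (hab u) (hbb u)⟩
  inv_mem' := by
    rintro a ⟨ha, hab⟩
    exact ⟨inv_mem ha, fun u hu => hab u (moves_inv.1 hu)⟩

lemma mem_FtrivP {l : Λ} {g : Equiv.Perm (SS Λ)} :
    g ∈ FtrivP l ↔ g ∈ GG Λ ∧ ∀ u, Moves g u → u ≤ l := Iff.rfl

lemma FtrivP_conj {l : Λ} {g k : Equiv.Perm (SS Λ)} (hg : g ∈ GG Λ) (hk : k ∈ FtrivP l) :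
    g * k * g⁻¹ ∈ FtrivP l := by
  obtain ⟨hkG, hkb⟩ := hk
  refine ⟨mul_mem (mul_mem hg hkG) (inv_mem hg), ?_⟩
  intro u hu
  by_contra hgt
  rw [not_le] at hgt
  obtain ⟨x, hx⟩ := hu
  apply hx
  show ((g * k * g⁻¹) x).1 u = x.1 u
  have h1 : ∀ w, u ≤ w → (k (g⁻¹ x)).1 w = (g⁻¹ x).1 w := by
    intro w hw
    apply not_moves_apply
    intro hmv
    exact absurd (hkb w hmv) (not_le.2 (hgt.trans_le hw))
  have h2 := agrGe_apply hg h1 u le_rfl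
  rw [Equiv.Perm.mul_apply, Equiv.Perm.mul_apply, h2, Equiv.Perm.apply_inv_self]

lemma sig_oneS_mem_FtrivP (l : Λ) (a : A5) : sig l oneS a ∈ FtrivP l :=
  ⟨sig_mem l oneS a, fun u hu => le_of_eq ((sig_clean l oneS a).moves_eq hu)⟩

lemma sig_oneS_ne_one (l : Λ) {a : A5} (ha : a ≠ 1) : sig l oneS a ≠ 1 := by
  intro hc
  obtain ⟨x, hx⟩ := sig_moves l oneS ha
  rw [hc] at hx
  exact hx rfl

lemma FtrivP_strictMono : StrictMono (FtrivP : Λ → Subgroup (Equiv.Perm (SS Λ))) := by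
  intro l l' hll
  constructor
  · rintro g ⟨hg, hb⟩
    exact ⟨hg, fun u hu => (hb u hu).trans hll.le⟩
  · intro hle
    obtain ⟨v, hv⟩ := exists_ne (1 : A5)
    have h1 : sig l' oneS v ∈ FtrivP l' := sig_oneS_mem_FtrivP l' v
    have h2 := hle h1
    obtain ⟨_, hb⟩ := h2
    exact absurd (hb l' (sig_moves l' oneS hv)) (not_le.2 hll)

variable (Λ) in
abbrev Ggrp := ↥(GG Λ)

def Ft (l : Λ) : Subgroup (Ggrp Λ) := (FtrivP l).comap (GG Λ).subtype

lemma mem_Ft {l : Λ} {g : Ggrp Λ} : g ∈ Ft l ↔ ∀ u, Moves (g : Equiv.Perm (SS Λ)) u → u ≤ l := by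
  constructor
  · rintro ⟨_, hb⟩ u hu
    exact hb u hu
  · intro hb
    exact ⟨g.2, hb⟩

lemma Ft_normal (l : Λ) : (Ft l).Normal := by
  constructor
  intro n hn g
  have := FtrivP_conj (l := l) g.2 hn
  exact this

lemma Ft_strictMono : StrictMono (Ft : Λ → Subgroup (Ggrp Λ)) := by
  intro l l' hll
  have h := FtrivP_strictMono hll
  constructor
  · intro g hg
    exact h.le hg
  · intro hle
    obtain ⟨v, hv⟩ := exists_ne (1 : A5)
    have h1 : (⟨sig l' oneS v, sig_mem l' oneS v⟩ : Ggrp Λ) ∈ Ft l' :=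
      sig_oneS_mem_FtrivP l' v
    have h2 := hle h1
    obtain ⟨_, hb⟩ := h2
    exact absurd (hb l' (sig_moves l' oneS hv)) (not_le.2 hll)

lemma Ft_ne_bot (l : Λ) : Ft l ≠ ⊥ := by
  intro hc
  obtain ⟨v, hv⟩ := exists_ne (1 : A5)
  have h1 : (⟨sig l oneS v, sig_mem l oneS v⟩ : Ggrp Λ) ∈ Ft l :=
    sig_oneS_mem_FtrivP l v
  rw [hc, Subgroup.mem_bot] at h1
  have := congrArg Subtype.val h1
  exact sig_oneS_ne_one l hv this

lemma classify_subtype [WellFoundedGT Λ] (Nh : Subgroup (Ggrp Λ)) (hnorm : Nh.Normal)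
    (hne : Nh ≠ ⊥) : ∃ l : Λ, Nh = Ft l := by
  classical
  set N : Subgroup (Equiv.Perm (SS Λ)) := Nh.map (GG Λ).subtype with hNdef
  have hNG : N ≤ GG Λ := Subgroup.map_subtype_le Nh
  have hconj : ∀ g ∈ GG Λ, ∀ k ∈ N, g * k * g⁻¹ ∈ N := by
    intro g hg k hk
    obtain ⟨kh, hkh, rfl⟩ := hk
    refine ⟨(⟨g, hg⟩ : Ggrp Λ) * kh * (⟨g, hg⟩ : Ggrp Λ)⁻¹, hnorm.conj_mem kh hkh _, rfl⟩
  obtain ⟨kh, hkhN, hkhne⟩ := Nh.bot_or_exists_ne_one.resolve_left hne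
  have hkne : (kh : Equiv.Perm (SS Λ)) ≠ 1 := by
    intro hc
    exact hkhne (Subtype.ext hc)
  have hmvex : ∃ u, Moves (kh : Equiv.Perm (SS Λ)) u := by
    by_contra hc
    push_neg at hc
    apply hkne
    apply Equiv.ext
    intro x
    apply Subtype.ext
    funext u
    exact not_moves_apply (hc u) x
  set TT : Set Λ := {u | ∃ n ∈ N, Moves n u} with hTT
  have hTTne : TT.Nonempty := by
    obtain ⟨u, hu⟩ := hmvex
    exact ⟨u, ⟨kh, ⟨kh, hkhN, rfl⟩, hu⟩⟩
  obtain ⟨l, hlTT, hlmax⟩ := (IsWellFounded.wf (r := ((· > ·) : Λ → Λ → Prop))).has_min TT hTTne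
  have hl2 : ∀ n ∈ N, ∀ u, Moves n u → u ≤ l := by
    intro n hn u hu
    by_contra hgt
    exact hlmax u ⟨n, hn, hu⟩ (not_le.1 hgt)
  obtain ⟨n0, hn0, hn0mv⟩ := hlTT
  have hNeq : N = FtrivP l := by
    ext g
    constructor
    · intro hg
      exact ⟨hNG hg, hl2 g hg⟩
    · rintro ⟨hgG, hb⟩
      exact classify_aux hconj hNG ⟨n0, hn0, hn0mv⟩ hl2 g hgG hb
  refine ⟨l, ?_⟩
  have hinj : Function.Injective (GG Λ).subtype := Subtype.val_injective
  calc Nh = (Nh.map (GG Λ).subtype).comap (GG Λ).subtype :=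
        (Subgroup.comap_map_eq_self_of_injective hinj Nh).symm
    _ = (FtrivP l).comap (GG Λ).subtype := by rw [← hNdef, hNeq]
    _ = Ft l := rfl

/-- The Hopf property for `GG Λ` over a linear order with well-founded `>`. -/
theorem hopf_main [WellFoundedGT Λ] (f : Ggrp Λ →* Ggrp Λ) (hf : Function.Surjective f) :
    Function.Injective f := by
  classical
  rw [← MonoidHom.ker_eq_bot_iff]
  by_contra hne
  obtain ⟨l0, hl0⟩ := classify_subtype f.ker (MonoidHom.normal_ker f) hne
  have hcomap : ∀ v : Λ, ∃ w : Λ, (Ft v).comap f = Ft w := by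
    intro v
    refine classify_subtype ((Ft v).comap f) ((Ft_normal v).comap f) ?_
    intro hc
    apply hne
    have h1 : f.ker ≤ (Ft v).comap f := by
      rw [← MonoidHom.comap_bot]
      exact Subgroup.comap_mono bot_le
    rw [hc] at h1
    exact le_bot_iff.1 h1
  set η : Λ → Λ := fun v => (hcomap v).choose with hη
  have hηspec : ∀ v, (Ft v).comap f = Ft (η v) := fun v => (hcomap v).choose_spec
  have hcomap_lt : ∀ {A B : Subgroup (Ggrp Λ)}, A < B → A.comap f < B.comap f := by
    intro A B hAB
    refine lt_of_le_of_ne (Subgroup.comap_mono hAB.le) ?_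
    intro hc
    have := congrArg (Subgroup.map f) hc
    rw [Subgroup.map_comap_eq_self_of_surjective hf, Subgroup.map_comap_eq_self_of_surjective hf]
      at this
    exact absurd this hAB.ne
  have hηmono : StrictMono η := by
    intro v v' hvv
    have h1 : Ft (η v) < Ft (η v') := by
      rw [← hηspec v, ← hηspec v']
      exact hcomap_lt (Ft_strictMono hvv)
    exact (Ft_strictMono.lt_iff_lt).1 h1
  have hbig : ∀ v, l0 < η v := by
    intro v
    have h1 : (⊥ : Subgroup (Ggrp Λ)) < Ft v := bot_lt_iff_ne_bot.2 (Ft_ne_bot v)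
    have h2 : f.ker < Ft (η v) := by
      rw [← hηspec v, ← MonoidHom.comap_bot]
      exact hcomap_lt h1
    rw [hl0] at h2
    exact (Ft_strictMono.lt_iff_lt).1 h2
  exact absurd (hbig l0) (not_lt.2 hηmono.apply_le)

end GWP
end

/-- for a countable well-order `W`, the group `G_W = Wr_{λ∈W^op} A₅` is
Hopfian: every surjective group homomorphism `G_W → G_W` is injective. -/
theorem gw_hopfian_of_wellOrder (W : Type*) [LinearOrder W] [WellFoundedLT W] [Countable W]
    (f : ↥(GW.Wr Wᵒᵈ (fun _ : Wᵒᵈ => ↥(alternatingGroup (Fin 5)))) →*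
         ↥(GW.Wr Wᵒᵈ (fun _ : Wᵒᵈ => ↥(alternatingGroup (Fin 5)))))
    (hf : Function.Surjective f) :
    Function.Injective f :=
  GWP.hopf_main (Λ := Wᵒᵈ) f hf
end

section
/- Let W be a countable linear order that is order-isomorphic to a proper initial segment of itself, i.e., there is a proper downward closed subset L ⊊ W with L order-isomorphic to W. Then G_W = Wr_{λ∈W^op} H_λ (every H_λ equal to A₅) is not Hopfian: there is a surjective group homomorphism from G_W to G_W that is not injective. -/
open scoped Classical

noncomputable section

namespace GWAux

open GW Equiv

variable {Λ : Type*} [PartialOrder Λ] {H : Λ → Type*} [∀ l, Group (H l)]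

/-! ### Restriction to an upward closed subset -/

variable (Γ : Set Λ)

/-- Restriction of an element of `S Λ H` to the coordinates in `Γ`. -/
def res (x : S Λ H) : S ↥Γ (fun l => H l.1) :=
  ⟨fun l => x.1 l.1, (x.2.preimage (Subtype.val_injective.injOn)).subset (by
    intro l hl; exact hl)⟩

/-- Extension by `1` of an element of `S ↥Γ` to all of `Λ`. -/
def ext (y : S ↥Γ (fun l => H l.1)) : S Λ H :=
  ⟨fun l => if h : l ∈ Γ then y.1 ⟨l, h⟩ else 1, ((y.2.image Subtype.val).subset (by
    intro l hl
    by_cases h : l ∈ Γ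
    · refine ⟨⟨l, h⟩, ?_, rfl⟩
      simpa [supp, h] using hl
    · simp [supp, h] at hl))⟩

lemma res_ext (y : S ↥Γ (fun l => H l.1)) : res Γ (ext Γ y) = y := by
  apply Subtype.ext
  funext l
  simp [res, ext]

/-- `g'` is the permutation of `S ↥Γ` induced by `g`. -/
def Compat (g : Perm (S Λ H)) (g' : Perm (S ↥Γ (fun l => H l.1))) : Prop :=
  ∀ x, res Γ (g x) = g' (res Γ x)

lemma compat_one : Compat Γ (1 : Perm (S Λ H)) 1 := fun _ => rfl

lemma Compat.mul {g₁ g₂ : Perm (S Λ H)} {g₁' g₂'} (h₁ : Compat Γ g₁ g₁')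
    (h₂ : Compat Γ g₂ g₂') : Compat Γ (g₁ * g₂) (g₁' * g₂') := fun x => by
  simp only [Perm.mul_apply]
  rw [h₁, h₂]

lemma Compat.inv {g : Perm (S Λ H)} {g'} (h : Compat Γ g g') :
    Compat Γ g⁻¹ g'⁻¹ := fun x => by
  have := h (g⁻¹ x)
  rw [show g (g⁻¹ x) = x from g.apply_symm_apply x] at this
  rw [this]
  simp

lemma compat_unique {g : Perm (S Λ H)} {g₁ g₂} (h₁ : Compat Γ g g₁)
    (h₂ : Compat Γ g g₂) : g₁ = g₂ := by
  apply Equiv.ext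
  intro y
  have := (h₁ (ext Γ y)).symm.trans (h₂ (ext Γ y))
  rwa [res_ext] at this

lemma compat_xi_mem (hΓ : ∀ ⦃l⦄, l ∈ Γ → ∀ ⦃m⦄, l < m → m ∈ Γ) (l : ↥Γ) (h : H l.1) :
    Compat Γ (xi H l.1 h) (xi (fun m : ↥Γ => H m.1) l h) := by
  intro x
  apply Subtype.ext
  funext m
  show xiFun H l.1 h x.1 m.1 = xiFun (fun m : ↥Γ => H m.1) l h (fun n : ↥Γ => x.1 n.1) m
  rcases eq_or_ne m l with rfl | hne
  · have hc : (∀ n : Λ, m.1 < n → x.1 n = 1) ↔ (∀ n : ↥Γ, m < n → x.1 n.1 = 1) := by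
      constructor
      · intro hc n hn
        exact hc n.1 (Subtype.coe_lt_coe.mpr hn)
      · intro hc n hn
        exact hc ⟨n, hΓ m.2 hn⟩ (Subtype.coe_lt_coe.mp hn)
    simp only [xiFun, Function.update_self]
    by_cases hcond : ∀ n : Λ, m.1 < n → x.1 n = 1
    · rw [if_pos hcond, if_pos (hc.mp hcond)]
    · rw [if_neg hcond, if_neg (fun hh => hcond (hc.mpr hh))]
  · have hne' : m.1 ≠ l.1 := fun hh => hne (Subtype.ext hh)
    rw [xiFun_apply_ne H l.1 h x.1 hne',
      xiFun_apply_ne (fun m : ↥Γ => H m.1) l h _ hne]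

lemma compat_xi_notmem {k : Λ} (hk : k ∉ Γ) (h : H k) :
    Compat Γ (xi H k h) 1 := by
  intro x
  apply Subtype.ext
  funext m
  show xiFun H k h x.1 m.1 = x.1 m.1
  exact xiFun_apply_ne H k h x.1 (fun hh => hk (hh ▸ m.2))

lemma exists_compat (hΓ : ∀ ⦃l⦄, l ∈ Γ → ∀ ⦃m⦄, l < m → m ∈ Γ) {g : Perm (S Λ H)}
    (hg : g ∈ Wr Λ H) : ∃ g' ∈ Wr ↥Γ (fun l => H l.1), Compat Γ g g' := by
  induction hg using Subgroup.closure_induction with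
  | mem g hgen =>
    obtain ⟨l, h, rfl⟩ := hgen
    by_cases hl : l ∈ Γ
    · exact ⟨xi (fun m : ↥Γ => H m.1) ⟨l, hl⟩ h,
        Subgroup.subset_closure ⟨⟨l, hl⟩, h, rfl⟩, compat_xi_mem Γ hΓ ⟨l, hl⟩ h⟩
    · exact ⟨1, one_mem _, compat_xi_notmem Γ hl h⟩
  | one => exact ⟨1, one_mem _, compat_one Γ⟩
  | mul a b _ _ ha hb =>
    obtain ⟨a', ha', hca⟩ := ha
    obtain ⟨b', hb', hcb⟩ := hb
    exact ⟨a' * b', mul_mem ha' hb', hca.mul Γ hcb⟩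
  | inv a _ ha =>
    obtain ⟨a', ha', hca⟩ := ha
    exact ⟨a'⁻¹, inv_mem ha', hca.inv Γ⟩

lemma exists_compat_rev (hΓ : ∀ ⦃l⦄, l ∈ Γ → ∀ ⦃m⦄, l < m → m ∈ Γ)
    {g' : Perm (S ↥Γ (fun l => H l.1))} (hg' : g' ∈ Wr ↥Γ (fun l => H l.1)) :
    ∃ g ∈ Wr Λ H, Compat Γ g g' := by
  induction hg' using Subgroup.closure_induction with
  | mem g hgen =>
    obtain ⟨l, h, rfl⟩ := hgen
    exact ⟨xi H l.1 h, Subgroup.subset_closure ⟨l.1, h, rfl⟩, compat_xi_mem Γ hΓ l h⟩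
  | one => exact ⟨1, one_mem _, compat_one Γ⟩
  | mul a b _ _ ha hb =>
    obtain ⟨a', ha', hca⟩ := ha
    obtain ⟨b', hb', hcb⟩ := hb
    exact ⟨a' * b', mul_mem ha' hb', hca.mul Γ hcb⟩
  | inv a _ ha =>
    obtain ⟨a', ha', hca⟩ := ha
    exact ⟨a'⁻¹, inv_mem ha', hca.inv Γ⟩

variable (H) in
/-- The restriction homomorphism `Wr Λ H →* Wr ↥Γ H`. -/
def rHom (hΓ : ∀ ⦃l⦄, l ∈ Γ → ∀ ⦃m⦄, l < m → m ∈ Γ) :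
    ↥(Wr Λ H) →* ↥(Wr ↥Γ (fun l => H l.1)) where
  toFun g := ⟨(exists_compat Γ hΓ g.2).choose, (exists_compat Γ hΓ g.2).choose_spec.1⟩
  map_one' := Subtype.ext <| compat_unique Γ
    (exists_compat Γ hΓ (one_mem _)).choose_spec.2 (compat_one Γ)
  map_mul' g₁ g₂ := Subtype.ext <| compat_unique Γ
    (exists_compat Γ hΓ (mul_mem g₁.2 g₂.2)).choose_spec.2
    ((exists_compat Γ hΓ g₁.2).choose_spec.2.mul Γ (exists_compat Γ hΓ g₂.2).choose_spec.2)

lemma rHom_spec (hΓ : ∀ ⦃l⦄, l ∈ Γ → ∀ ⦃m⦄, l < m → m ∈ Γ) (g : ↥(Wr Λ H)) :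
    Compat Γ g.1 (rHom H Γ hΓ g).1 := (exists_compat Γ hΓ g.2).choose_spec.2

lemma rHom_surjective (hΓ : ∀ ⦃l⦄, l ∈ Γ → ∀ ⦃m⦄, l < m → m ∈ Γ) :
    Function.Surjective (rHom H Γ hΓ) := by
  rintro ⟨g', hg'⟩
  obtain ⟨g, hg, hc⟩ := exists_compat_rev Γ hΓ hg'
  exact ⟨⟨g, hg⟩, Subtype.ext (compat_unique Γ (rHom_spec Γ hΓ ⟨g, hg⟩) hc)⟩

lemma rHom_xi_notmem (hΓ : ∀ ⦃l⦄, l ∈ Γ → ∀ ⦃m⦄, l < m → m ∈ Γ) {k : Λ} (hk : k ∉ Γ)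
    (h : H k) (hmem : xi H k h ∈ Wr Λ H) :
    rHom H Γ hΓ ⟨xi H k h, hmem⟩ = 1 :=
  Subtype.ext (compat_unique Γ (rHom_spec Γ hΓ ⟨xi H k h, hmem⟩) (compat_xi_notmem Γ hk h))

/-! ### Nontriviality of `ξ` -/

lemma xi_ne_one (l : Λ) {h : H l} (hh : h ≠ 1) : xi H l h ≠ 1 := by
  intro hc
  have hx : (supp (fun m : Λ => (1 : H m))).Finite := by simp [supp]
  have := congrArg (fun p : Perm (S Λ H) => (p ⟨fun _ => 1, hx⟩).1 l) hc
  simp only [xi, Perm.coe_one, id_eq] at this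
  have h2 : xiFun H l h (fun _ => 1) l = 1 := this
  rw [xiFun] at h2
  simp at h2
  exact hh h2

/-! ### Transport along an order isomorphism (constant family) -/

variable {Λ₂ : Type*} [PartialOrder Λ₂] {A : Type*} [Group A]

/-- Transport of the restricted product along an order isomorphism. -/
def sEquiv (e : Λ ≃o Λ₂) : S Λ (fun _ => A) ≃ S Λ₂ (fun _ => A) where
  toFun x := ⟨fun m => x.1 (e.symm m), (x.2.image e).subset (by
    rintro m hm
    exact ⟨e.symm m, hm, by simp⟩)⟩
  invFun y := ⟨fun m => y.1 (e m), (y.2.image e.symm).subset (by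
    rintro m hm
    exact ⟨e m, hm, by simp⟩)⟩
  left_inv x := Subtype.ext (funext fun m => by simp)
  right_inv y := Subtype.ext (funext fun m => by simp)

/-- Transport of the permutation group along an order isomorphism. -/
def permE (e : Λ ≃o Λ₂) :
    Perm (S Λ (fun _ => A)) ≃* Perm (S Λ₂ (fun _ => A)) :=
  { Equiv.permCongr (sEquiv e) with
    map_mul' := fun p q => Equiv.ext fun x => by
      simp [Equiv.permCongr_apply, Perm.mul_apply] }

lemma permE_apply (e : Λ ≃o Λ₂) (p : Perm (S Λ (fun _ => A))) (x) :
    permE e p x = sEquiv e (p ((sEquiv e).symm x)) := rfl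

lemma permE_xi (e : Λ ≃o Λ₂) (l : Λ) (h : A) :
    permE e (xi (fun _ : Λ => A) l h) = xi (fun _ : Λ₂ => A) (e l) h := by
  apply Equiv.ext
  intro x
  apply Subtype.ext
  funext m
  show xiFun (fun _ : Λ => A) l h (fun n => x.1 (e n)) (e.symm m)
      = xiFun (fun _ : Λ₂ => A) (e l) h x.1 m
  rcases eq_or_ne m (e l) with rfl | hne
  · have hsm : e.symm (e l) = l := e.symm_apply_apply l
    have hc : (∀ n : Λ, l < n → x.1 (e n) = 1) ↔ (∀ n : Λ₂, e l < n → x.1 n = 1) := by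
      constructor
      · intro hc n hn
        have := hc (e.symm n) (by
          have : e l < e (e.symm n) := by simpa using hn
          exact e.lt_iff_lt.mp this)
        simpa using this
      · intro hc n hn
        exact hc (e n) (e.lt_iff_lt.mpr hn)
    rw [hsm]
    show Function.update (fun n => x.1 (e n)) l _ l = Function.update x.1 (e l) _ (e l)
    rw [Function.update_self, Function.update_self]
    by_cases hcond : ∀ n : Λ, l < n → x.1 (e n) = 1
    · rw [if_pos hcond, if_pos (hc.mp hcond)]
    · rw [if_neg hcond, if_neg (fun hh => hcond (hc.mpr hh))]
  · have hne' : e.symm m ≠ l := fun hh => hne (by rw [← hh]; simp)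
    rw [xiFun_apply_ne (fun _ : Λ => A) l h _ hne', xiFun_apply_ne (fun _ : Λ₂ => A) (e l) h _ hne]
    simp

lemma map_wr (e : Λ ≃o Λ₂) :
    (Wr Λ (fun _ : Λ => A)).map
      ((permE e : Perm (S Λ fun _ => A) ≃* Perm (S Λ₂ fun _ => A)) :
        Perm (S Λ fun _ => A) →* Perm (S Λ₂ fun _ => A)) = Wr Λ₂ (fun _ : Λ₂ => A) := by
  rw [Wr, MonoidHom.map_closure, Wr]
  congr 1
  ext z
  constructor
  · rintro ⟨w, ⟨l, h, rfl⟩, rfl⟩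
    refine ⟨e l, h, ?_⟩
    simp only [MonoidHom.coe_coe]
    exact permE_xi e l h
  · rintro ⟨l, h, rfl⟩
    refine ⟨xi (fun _ : Λ => A) (e.symm l) h, ⟨e.symm l, h, rfl⟩, ?_⟩
    simp only [MonoidHom.coe_coe]
    rw [permE_xi, OrderIso.apply_symm_apply]

/-- Transport of the generalized wreath product along an order isomorphism. -/
def wrEquiv (e : Λ ≃o Λ₂) :
    ↥(Wr Λ (fun _ => A)) ≃* ↥(Wr Λ₂ (fun _ => A)) :=
  ((permE e).subgroupMap (Wr Λ (fun _ => A))).trans (MulEquiv.subgroupCongr (map_wr e))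

end GWAux

end

/-- if a countable linear order `W` is order-isomorphic to a proper initial
segment (proper downward closed subset) of itself, then `G_W = Wr_{λ∈W^op} A₅` is not
Hopfian: there is a surjective endomorphism of `G_W` that is not injective. -/
theorem gw_not_hopfian (W : Type*) [LinearOrder W] [Countable W] (L : Set W)
    (hdc : ∀ ⦃a b : W⦄, a ∈ L → b ≤ a → b ∈ L) (hL : L ≠ Set.univ)
    (hiso : Nonempty (↥L ≃o W)) :
    ∃ f : ↥(GW.Wr Wᵒᵈ (fun _ : Wᵒᵈ => ↥(alternatingGroup (Fin 5)))) →*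
          ↥(GW.Wr Wᵒᵈ (fun _ : Wᵒᵈ => ↥(alternatingGroup (Fin 5)))),
      Function.Surjective f ∧ ¬ Function.Injective f := by
  classical
  obtain ⟨e⟩ := hiso
  set A := ↥(alternatingGroup (Fin 5)) with hA
  let Γ : Set Wᵒᵈ := L
  have hΓ : ∀ ⦃l⦄, l ∈ Γ → ∀ ⦃m : Wᵒᵈ⦄, l < m → m ∈ Γ := by
    intro l hl m hlm
    exact hdc hl (le_of_lt hlm)
  let j : (↥Γ) ≃o Wᵒᵈ :=
    { toEquiv := e.toEquiv
      map_rel_iff' := by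
        intro a b
        exact e.map_rel_iff (a := b) (b := a) }
  let r : ↥(GW.Wr Wᵒᵈ (fun _ : Wᵒᵈ => A)) →* ↥(GW.Wr ↥Γ (fun _ => A)) :=
    GWAux.rHom (fun _ : Wᵒᵈ => A) Γ hΓ
  let w := GWAux.wrEquiv (A := A) j
  refine ⟨w.toMonoidHom.comp r, ?_, ?_⟩
  · intro y
    obtain ⟨x, hx⟩ := GWAux.rHom_surjective (H := fun _ : Wᵒᵈ => A) Γ hΓ (w.symm y)
    refine ⟨x, ?_⟩
    simp only [MonoidHom.comp_apply, MulEquiv.coe_toMonoidHom]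
    rw [show r x = w.symm y from hx]
    simp
  · intro hinj
    obtain ⟨k, hk⟩ : ∃ k, k ∉ L := by
      by_contra hc
      push_neg at hc
      exact hL (Set.eq_univ_of_forall hc)
    have hnt : Nontrivial A := alternatingGroup.nontrivial_of_three_le_card (by simp)
    obtain ⟨h, hh⟩ := exists_ne (1 : A)
    have hmem : GW.xi (fun _ : Wᵒᵈ => A) k h ∈ GW.Wr Wᵒᵈ (fun _ : Wᵒᵈ => A) :=
      Subgroup.subset_closure ⟨k, h, rfl⟩
    have hr : r ⟨GW.xi (fun _ : Wᵒᵈ => A) k h, hmem⟩ = 1 :=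
      GWAux.rHom_xi_notmem (H := fun _ : Wᵒᵈ => A) Γ hΓ (k := k) hk h hmem
    have h1 : (⟨GW.xi (fun _ : Wᵒᵈ => A) k h, hmem⟩ :
        ↥(GW.Wr Wᵒᵈ (fun _ : Wᵒᵈ => A))) = 1 := by
      apply hinj
      simp only [MonoidHom.comp_apply, MulEquiv.coe_toMonoidHom, hr, map_one]
    have hval := congrArg Subtype.val h1
    simp only [OneMemClass.coe_one] at hval
    exact GWAux.xi_ne_one (H := fun _ : Wᵒᵈ => A) k hh hval
end

section
/- Let σ and α be ordinals with α < σ. Then the linear order σ · (1 + ℚ) + α — the lexicographic sum of α after the lexicographic product of σ copies indexed by the linear order 1 + ℚ reversed appropriately, i.e., the order type (σ ×ₗ (1 ⊕ₗ ℚ)) ⊕ₗ α where the product is ordered lexicographically with the (1 ⊕ₗ ℚ)-coordinate most significant — is order-isomorphic to a proper initial segment (proper downward closed subset) of itself. -/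
open scoped Lex

namespace PWO15

noncomputable def jq : ↥(Set.Iio (0:ℚ)) ≃o ℚ :=
  Classical.choice (Order.iso_of_countable_dense _ _)

noncomputable def m : (PUnit ⊕ₗ ℚ) → (PUnit ⊕ₗ ℚ) := fun c =>
  match ofLex c with
  | Sum.inl _ => toLex (Sum.inl PUnit.unit)
  | Sum.inr q => toLex (Sum.inr (jq.symm q : ℚ))

theorem m_inl (u : PUnit) : m (toLex (Sum.inl u)) = toLex (Sum.inl PUnit.unit) := rfl
theorem m_inr (q : ℚ) : m (toLex (Sum.inr q)) = toLex (Sum.inr (jq.symm q : ℚ)) := rfl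

theorem m_lt (c : PUnit ⊕ₗ ℚ) : m c < toLex (Sum.inr (0:ℚ)) := by
  obtain ⟨s, rfl⟩ : ∃ s, toLex s = c := ⟨ofLex c, rfl⟩
  cases s with
  | inl u => exact Sum.Lex.inl_lt_inr _ _
  | inr q => exact Sum.Lex.inr_lt_inr_iff.2 (jq.symm q).2

theorem m_strictMono : StrictMono m := by
  intro c d hcd
  obtain ⟨s, rfl⟩ : ∃ s, toLex s = c := ⟨ofLex c, rfl⟩
  obtain ⟨t, rfl⟩ : ∃ t, toLex t = d := ⟨ofLex d, rfl⟩
  cases s with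
  | inl u =>
    cases t with
    | inl v => exact absurd hcd (by simp [Sum.Lex.inl_lt_inl_iff])
    | inr q => exact Sum.Lex.inl_lt_inr _ _
  | inr q =>
    cases t with
    | inl v => exact absurd hcd Sum.Lex.not_inr_lt_inl
    | inr r =>
      have : q < r := Sum.Lex.inr_lt_inr_iff.1 hcd
      exact Sum.Lex.inr_lt_inr_iff.2 (Subtype.coe_lt_coe.2 (jq.symm.lt_iff_lt.2 this))

theorem m_surj (c : PUnit ⊕ₗ ℚ) (hc : c < toLex (Sum.inr (0:ℚ))) : ∃ d, m d = c := by
  obtain ⟨s, rfl⟩ : ∃ s, toLex s = c := ⟨ofLex c, rfl⟩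
  cases s with
  | inl u => exact ⟨toLex (Sum.inl PUnit.unit), rfl⟩
  | inr q =>
    have hq : q < 0 := Sum.Lex.inr_lt_inr_iff.1 hc
    refine ⟨toLex (Sum.inr (jq ⟨q, hq⟩)), ?_⟩
    rw [m_inr, jq.symm_apply_apply]

variable (σ α : Ordinal) (h : α < σ)

noncomputable def epoint : σ.ToType := (Ordinal.ToType.mk (o := σ)) ⟨α, h⟩

theorem symm_lt {o : Ordinal} (x : Set.Iio o) : (x : Ordinal) < o := x.2

noncomputable def κ : α.ToType → σ.ToType := fun a =>
  (Ordinal.ToType.mk (o := σ))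
    ⟨(((Ordinal.ToType.mk (o := α))).symm a : Ordinal),
      Set.mem_Iio.2 (lt_trans (symm_lt _) h)⟩

theorem κ_lt (a : α.ToType) : κ σ α h a < epoint σ α h :=
  ((Ordinal.ToType.mk (o := σ))).lt_iff_lt.2 (Subtype.mk_lt_mk.2 (symm_lt _))

theorem κ_strictMono : StrictMono (κ σ α h) := fun a b hab =>
  ((Ordinal.ToType.mk (o := σ))).lt_iff_lt.2
    (Subtype.mk_lt_mk.2 (show (((Ordinal.ToType.mk (o := α))).symm a : Ordinal)
      < (((Ordinal.ToType.mk (o := α))).symm b : Ordinal) from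
      Subtype.coe_lt_coe.2 (((Ordinal.ToType.mk (o := α))).symm.lt_iff_lt.2 hab)))

theorem κ_surj (t : σ.ToType) (ht : t < epoint σ α h) : ∃ a, κ σ α h a = t := by
  have h1 : (((Ordinal.ToType.mk (o := σ))).symm t : Ordinal) < α := by
    have h2 := ((Ordinal.ToType.mk (o := σ))).symm.lt_iff_lt.2 ht
    rw [epoint, OrderIso.symm_apply_apply] at h2
    exact h2
  refine ⟨(Ordinal.ToType.mk (o := α)) ⟨_, Set.mem_Iio.2 h1⟩, ?_⟩
  rw [κ]
  simp only [OrderIso.symm_apply_apply]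
  exact (congrArg _ (Subtype.ext rfl)).trans (((Ordinal.ToType.mk (o := σ))).apply_symm_apply t)

noncomputable def ψ : (((PUnit ⊕ₗ ℚ) ×ₗ σ.ToType) ⊕ₗ α.ToType) →
    (((PUnit ⊕ₗ ℚ) ×ₗ σ.ToType) ⊕ₗ α.ToType) := fun x =>
  match ofLex x with
  | Sum.inl p => toLex (Sum.inl (toLex (m (ofLex p).1, (ofLex p).2)))
  | Sum.inr a => toLex (Sum.inl (toLex (toLex (Sum.inr (0:ℚ)), κ σ α h a)))

theorem ψ_inl (c : PUnit ⊕ₗ ℚ) (t : σ.ToType) :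
    ψ σ α h (toLex (Sum.inl (toLex (c, t)))) = toLex (Sum.inl (toLex (m c, t))) := rfl

theorem ψ_inr (a : α.ToType) :
    ψ σ α h (toLex (Sum.inr a)) =
      toLex (Sum.inl (toLex (toLex (Sum.inr (0:ℚ)), κ σ α h a))) := rfl

theorem ψ_strictMono : StrictMono (ψ σ α h) := by
  intro x y hxy
  obtain ⟨s, rfl⟩ : ∃ s, toLex s = x := ⟨ofLex x, rfl⟩
  obtain ⟨t, rfl⟩ : ∃ t, toLex t = y := ⟨ofLex y, rfl⟩
  cases s with
  | inl p =>
    obtain ⟨q, rfl⟩ : ∃ q, toLex q = p := ⟨ofLex p, rfl⟩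
    obtain ⟨c, u⟩ := q
    cases t with
    | inl p' =>
      obtain ⟨q', rfl⟩ : ∃ q', toLex q' = p' := ⟨ofLex p', rfl⟩
      obtain ⟨c', u'⟩ := q'
      rw [ψ_inl, ψ_inl]
      have h1 : toLex (c, u) < toLex (c', u') := Sum.Lex.inl_lt_inl_iff.1 hxy
      rw [Prod.Lex.lt_iff] at h1
      refine Sum.Lex.inl_lt_inl_iff.2 (Prod.Lex.lt_iff.2 ?_)
      rcases h1 with h1 | ⟨h1, h2⟩
      · exact Or.inl (m_strictMono h1)
      · exact Or.inr ⟨congrArg m h1, h2⟩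
    | inr a =>
      rw [ψ_inl, ψ_inr]
      exact Sum.Lex.inl_lt_inl_iff.2 (Prod.Lex.lt_iff.2 (Or.inl (m_lt c)))
  | inr a =>
    cases t with
    | inl p' => exact absurd hxy Sum.Lex.not_inr_lt_inl
    | inr a' =>
      rw [ψ_inr, ψ_inr]
      have h1 : a < a' := Sum.Lex.inr_lt_inr_iff.1 hxy
      exact Sum.Lex.inl_lt_inl_iff.2
        (Prod.Lex.lt_iff.2 (Or.inr ⟨rfl, κ_strictMono σ α h h1⟩))

theorem mem_range_of_lt (c : PUnit ⊕ₗ ℚ) (t : σ.ToType)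
    (hc : c < toLex (Sum.inr (0:ℚ))) :
    toLex (Sum.inl (toLex (c, t))) ∈ Set.range (ψ σ α h) := by
  obtain ⟨d, hd⟩ := m_surj c hc
  exact ⟨toLex (Sum.inl (toLex (d, t))), by rw [ψ_inl, hd]⟩

end PWO15

/-- for ordinals `α < σ`, the linear order `σ·(1+ℚ) + α` — here realized as
`((1 ⊕ₗ ℚ) ×ₗ σ) ⊕ₗ α`, pairs ordered lexicographically with the `(1 ⊕ₗ ℚ)`-coordinate
most significant, followed by a copy of `α` — is order-isomorphic to a proper initial
segment (proper downward closed subset) of itself. -/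
theorem pseudoWellOrder_iso_proper_initial_segment (σ α : Ordinal) (h : α < σ) :
    ∃ L : Set (((PUnit ⊕ₗ ℚ) ×ₗ σ.ToType) ⊕ₗ α.ToType),
      (∀ ⦃a b : ((PUnit ⊕ₗ ℚ) ×ₗ σ.ToType) ⊕ₗ α.ToType⦄, a ∈ L → b ≤ a → b ∈ L) ∧
      L ≠ Set.univ ∧
      Nonempty (↥L ≃o (((PUnit ⊕ₗ ℚ) ×ₗ σ.ToType) ⊕ₗ α.ToType)) := by
  classical
  refine ⟨Set.range (PWO15.ψ σ α h), ?_, ?_, ?_⟩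
  · -- downward closed
    rintro a b ⟨x, rfl⟩ hba
    obtain ⟨sb, rfl⟩ : ∃ s, toLex s = b := ⟨ofLex b, rfl⟩
    obtain ⟨sx, rfl⟩ : ∃ s, toLex s = x := ⟨ofLex x, rfl⟩
    cases sb with
    | inr b' =>
      exfalso
      cases sx with
      | inl p =>
        obtain ⟨q, rfl⟩ : ∃ q, toLex q = p := ⟨ofLex p, rfl⟩
        obtain ⟨c, u⟩ := q
        rw [PWO15.ψ_inl] at hba
        exact Sum.Lex.not_inr_le_inl hba
      | inr a' =>
        rw [PWO15.ψ_inr] at hba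
        exact Sum.Lex.not_inr_le_inl hba
    | inl p =>
      obtain ⟨q, rfl⟩ : ∃ q, toLex q = p := ⟨ofLex p, rfl⟩
      obtain ⟨c, u⟩ := q
      cases sx with
      | inl p' =>
        obtain ⟨q', rfl⟩ : ∃ q', toLex q' = p' := ⟨ofLex p', rfl⟩
        obtain ⟨c', u'⟩ := q'
        rw [PWO15.ψ_inl] at hba
        have h1 := Prod.Lex.le_iff.1 (Sum.Lex.inl_le_inl_iff.1 hba)
        have hc : c < toLex (Sum.inr (0:ℚ)) := by
          rcases h1 with h1 | ⟨h1, _⟩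
          · exact h1.trans (PWO15.m_lt c')
          · rw [show c = PWO15.m c' from h1]; exact PWO15.m_lt c'
        exact PWO15.mem_range_of_lt σ α h c u hc
      | inr a' =>
        rw [PWO15.ψ_inr] at hba
        have h1 := Prod.Lex.le_iff.1 (Sum.Lex.inl_le_inl_iff.1 hba)
        rcases h1 with h1 | ⟨h1, h2⟩
        · exact PWO15.mem_range_of_lt σ α h c u h1
        · have hu : u < PWO15.epoint σ α h := lt_of_le_of_lt h2 (PWO15.κ_lt σ α h a')
          obtain ⟨a₀, ha₀⟩ := PWO15.κ_surj σ α h u hu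
          refine ⟨toLex (Sum.inr a₀), ?_⟩
          rw [PWO15.ψ_inr, ha₀, show c = toLex (Sum.inr (0:ℚ)) from h1]
  · -- proper
    have hσ : σ ≠ 0 := fun h0 => by simp [h0] at h
    have : Nonempty σ.ToType := Ordinal.nonempty_toType_iff.2 hσ
    obtain ⟨t0⟩ := this
    intro heq
    have hmem : toLex (Sum.inl (toLex (toLex (Sum.inr (1:ℚ)), t0))) ∈
        Set.range (PWO15.ψ σ α h) := heq ▸ Set.mem_univ _
    obtain ⟨x, hx⟩ := hmem
    obtain ⟨sx, rfl⟩ : ∃ s, toLex s = x := ⟨ofLex x, rfl⟩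
    cases sx with
    | inl p =>
      obtain ⟨q, rfl⟩ : ∃ q, toLex q = p := ⟨ofLex p, rfl⟩
      obtain ⟨c, u⟩ := q
      rw [PWO15.ψ_inl] at hx
      have h1 : PWO15.m c = toLex (Sum.inr (1:ℚ)) := by
        have := toLex.injective hx
        have := Sum.inl.inj this
        have := toLex.injective this
        exact (Prod.mk.injEq _ _ _ _ ▸ this).1
      have h2 := PWO15.m_lt c
      rw [h1] at h2
      have : (1:ℚ) < 0 := Sum.Lex.inr_lt_inr_iff.1 h2
      norm_num at this
    | inr a' =>
      rw [PWO15.ψ_inr] at hx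
      have h1 : toLex (Sum.inr (0:ℚ)) = (toLex (Sum.inr (1:ℚ)) : PUnit ⊕ₗ ℚ) := by
        have := toLex.injective hx
        have := Sum.inl.inj this
        have := toLex.injective this
        exact (Prod.mk.injEq _ _ _ _ ▸ this).1
      have : (0:ℚ) = 1 := Sum.inr.inj (toLex.injective h1)
      norm_num at this
  · -- iso
    exact ⟨((PWO15.ψ_strictMono σ α h).orderIso _).symm⟩
end
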